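/- arXiv:1907.00658 — 2 statements merged into one kernel-verified Lean document; each statement's English description precedes it below -/
import Mathlib

section
/- There exists a primitive recursive relation on ℕ² that is not definable by any Δ₀ (bounded) formula over the standard model of arithmetic; in particular, the Δ₀-satisfaction relation Sat_{Δ₀} is primitive recursive but not rudimentary. -/
/-- Terms of the language of arithmetic `⟨0, 1, +, ×⟩` with variables among `v₀, …, v_{n-1}`. -/
inductive ATerm : ℕ → Type
  | zero {n} : ATerm n
  | one {n} : ATerm n
  | var {n} (i : Fin n) : ATerm n
  | add {n} (t s : ATerm n) : ATerm n
  | mul {n} (t s : ATerm n) : ATerm n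

/-- Evaluation of a term in the standard model `ℕ` under an assignment of the variables. -/
def ATerm.eval : ∀ {n}, ATerm n → (Fin n → ℕ) → ℕ
  | _, .zero, _ => 0
  | _, .one, _ => 1
  | _, .var i, v => v i
  | _, .add t s, v => t.eval v + s.eval v
  | _, .mul t s, v => t.eval v * s.eval v

/-- Bounded (Δ₀) formulas of the language of arithmetic `⟨0, 1, +, ×, ≤⟩` with free variables
among `v₀, …, v_{n-1}`: built from atomic formulas `t = s` and `t ≤ s` by Boolean connectives
and bounded quantifiers `∀ x ≤ t` and `∃ x ≤ t` (the newly bound variable is variable `0`,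
and the bound `t` may not contain it). -/
inductive Delta0 : ℕ → Type
  | eq {n} (t s : ATerm n) : Delta0 n
  | le {n} (t s : ATerm n) : Delta0 n
  | not {n} (φ : Delta0 n) : Delta0 n
  | and {n} (φ ψ : Delta0 n) : Delta0 n
  | or {n} (φ ψ : Delta0 n) : Delta0 n
  | imp {n} (φ ψ : Delta0 n) : Delta0 n
  | ball {n} (t : ATerm n) (φ : Delta0 (n + 1)) : Delta0 n
  | bex {n} (t : ATerm n) (φ : Delta0 (n + 1)) : Delta0 n

/-- Satisfaction of a Δ₀ formula in the standard model `ℕ`. -/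
def Delta0.Sat : ∀ {n}, Delta0 n → (Fin n → ℕ) → Prop
  | _, .eq t s, v => t.eval v = s.eval v
  | _, .le t s, v => t.eval v ≤ s.eval v
  | _, .not φ, v => ¬ φ.Sat v
  | _, .and φ ψ, v => φ.Sat v ∧ ψ.Sat v
  | _, .or φ ψ, v => φ.Sat v ∨ ψ.Sat v
  | _, .imp φ ψ, v => φ.Sat v → ψ.Sat v
  | _, .ball t φ, v => ∀ x ≤ t.eval v, φ.Sat (Fin.cons x v)
  | _, .bex t φ, v => ∃ x ≤ t.eval v, φ.Sat (Fin.cons x v)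

/-! ### Renaming of variables -/

def ATerm.rename : ∀ {n m}, (Fin n → Fin m) → ATerm n → ATerm m
  | _, _, _, .zero => .zero
  | _, _, _, .one => .one
  | _, _, f, .var i => .var (f i)
  | _, _, f, .add t s => .add (t.rename f) (s.rename f)
  | _, _, f, .mul t s => .mul (t.rename f) (s.rename f)

def Fin.extf {n m : ℕ} (f : Fin n → Fin m) : Fin (n+1) → Fin (m+1) :=
  Fin.cases 0 (fun i => (f i).succ)

def Delta0.rename : ∀ {n m}, (Fin n → Fin m) → Delta0 n → Delta0 m
  | _, _, f, .eq t s => .eq (t.rename f) (s.rename f)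
  | _, _, f, .le t s => .le (t.rename f) (s.rename f)
  | _, _, f, .not φ => .not (φ.rename f)
  | _, _, f, .and φ ψ => .and (φ.rename f) (ψ.rename f)
  | _, _, f, .or φ ψ => .or (φ.rename f) (ψ.rename f)
  | _, _, f, .imp φ ψ => .imp (φ.rename f) (ψ.rename f)
  | _, _, f, .ball t φ => .ball (t.rename f) (φ.rename (Fin.extf f))
  | _, _, f, .bex t φ => .bex (t.rename f) (φ.rename (Fin.extf f))

lemma ATerm.eval_rename : ∀ {n m} (f : Fin n → Fin m) (t : ATerm n) (v : Fin m → ℕ),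
    (t.rename f).eval v = t.eval (v ∘ f)
  | _, _, _, .zero, _ => by simp [rename, eval]
  | _, _, _, .one, _ => by simp [rename, eval]
  | _, _, _, .var i, _ => by simp [rename, eval]
  | _, _, f, .add t s, v => by simp [rename, eval, eval_rename f t v, eval_rename f s v]
  | _, _, f, .mul t s, v => by simp [rename, eval, eval_rename f t v, eval_rename f s v]

lemma Fin.cons_comp_extf {n m : ℕ} (f : Fin n → Fin m) (x : ℕ) (v : Fin m → ℕ) :
    (Fin.cons x v : Fin (m+1) → ℕ) ∘ Fin.extf f = Fin.cons x (v ∘ f) := by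
  funext i
  refine Fin.cases ?_ (fun j => ?_) i <;> simp [Fin.extf]

lemma Delta0.sat_rename : ∀ {n m} (f : Fin n → Fin m) (θ : Delta0 n) (v : Fin m → ℕ),
    (θ.rename f).Sat v ↔ θ.Sat (v ∘ f)
  | _, _, f, .eq t s, v => by simp [rename, Sat, ATerm.eval_rename]
  | _, _, f, .le t s, v => by simp [rename, Sat, ATerm.eval_rename]
  | _, _, f, .not φ, v => by simp [rename, Sat, sat_rename f φ v]
  | _, _, f, .and φ ψ, v => by simp [rename, Sat, sat_rename f φ v, sat_rename f ψ v]
  | _, _, f, .or φ ψ, v => by simp [rename, Sat, sat_rename f φ v, sat_rename f ψ v]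
  | _, _, f, .imp φ ψ, v => by simp [rename, Sat, sat_rename f φ v, sat_rename f ψ v]
  | _, _, f, .ball t φ, v => by
      simp only [rename, Sat, ATerm.eval_rename]
      refine forall_congr' fun x => imp_congr_right fun _ => ?_
      rw [sat_rename (Fin.extf f) φ (Fin.cons x v), Fin.cons_comp_extf]
  | _, _, f, .bex t φ, v => by
      simp only [rename, Sat, ATerm.eval_rename]
      refine exists_congr fun x => and_congr_right fun _ => ?_
      rw [sat_rename (Fin.extf f) φ (Fin.cons x v), Fin.cons_comp_extf]

/-! ### Gödel coding -/

def ATerm.gcode : ∀ {n}, ATerm n → ℕ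
  | _, .zero => Nat.pair 0 0 + 1
  | _, .one => Nat.pair 1 0 + 1
  | _, .var i => Nat.pair 2 i + 1
  | _, .add t s => Nat.pair 3 (Nat.pair t.gcode s.gcode) + 1
  | _, .mul t s => Nat.pair 4 (Nat.pair t.gcode s.gcode) + 1

def Delta0.gcode : ∀ {n}, Delta0 n → ℕ
  | _, .eq t s => Nat.pair 0 (Nat.pair t.gcode s.gcode) + 1
  | _, .le t s => Nat.pair 1 (Nat.pair t.gcode s.gcode) + 1
  | _, .not φ => Nat.pair 2 φ.gcode + 1
  | _, .and φ ψ => Nat.pair 3 (Nat.pair φ.gcode ψ.gcode) + 1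
  | _, .or φ ψ => Nat.pair 4 (Nat.pair φ.gcode ψ.gcode) + 1
  | _, .imp φ ψ => Nat.pair 5 (Nat.pair φ.gcode ψ.gcode) + 1
  | _, .ball t φ => Nat.pair 6 (Nat.pair t.gcode φ.gcode) + 1
  | _, .bex t φ => Nat.pair 7 (Nat.pair t.gcode φ.gcode) + 1

lemma ATerm.gcode_inj : ∀ {n} (t t' : ATerm n), t.gcode = t'.gcode → t = t' := by
  intro n t
  induction t with
  | zero => intro t'; cases t' <;> simp [gcode, Nat.pair_eq_pair]
  | one => intro t'; cases t' <;> simp [gcode, Nat.pair_eq_pair]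
  | var i => intro t'; cases t' <;> simp [gcode, Nat.pair_eq_pair] <;> exact fun h => Fin.ext h
  | add t s iht ihs =>
      intro t'; cases t' <;> simp [gcode, Nat.pair_eq_pair]
      intro h1 h2; exact ⟨iht _ h1, ihs _ h2⟩
  | mul t s iht ihs =>
      intro t'; cases t' <;> simp [gcode, Nat.pair_eq_pair]
      intro h1 h2; exact ⟨iht _ h1, ihs _ h2⟩

lemma Delta0.gcode_inj : ∀ {n} (θ θ' : Delta0 n), θ.gcode = θ'.gcode → θ = θ' := by
  intro n θ
  induction θ with
  | eq t s => intro θ'; cases θ' <;> simp [gcode, Nat.pair_eq_pair] <;>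
      exact fun h1 h2 => ⟨ATerm.gcode_inj _ _ h1, ATerm.gcode_inj _ _ h2⟩
  | le t s => intro θ'; cases θ' <;> simp [gcode, Nat.pair_eq_pair] <;>
      exact fun h1 h2 => ⟨ATerm.gcode_inj _ _ h1, ATerm.gcode_inj _ _ h2⟩
  | not φ ih => intro θ'; cases θ' <;> simp [gcode, Nat.pair_eq_pair]
                exact fun h => ih _ h
  | and φ ψ ihφ ihψ => intro θ'; cases θ' <;> simp [gcode, Nat.pair_eq_pair]
                       exact fun h1 h2 => ⟨ihφ _ h1, ihψ _ h2⟩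
  | or φ ψ ihφ ihψ => intro θ'; cases θ' <;> simp [gcode, Nat.pair_eq_pair]
                      exact fun h1 h2 => ⟨ihφ _ h1, ihψ _ h2⟩
  | imp φ ψ ihφ ihψ => intro θ'; cases θ' <;> simp [gcode, Nat.pair_eq_pair]
                       exact fun h1 h2 => ⟨ihφ _ h1, ihψ _ h2⟩
  | ball t φ ih => intro θ'; cases θ' <;> simp [gcode, Nat.pair_eq_pair]
                   exact fun h1 h2 => ⟨ATerm.gcode_inj _ _ h1, ih _ h2⟩
  | bex t φ ih => intro θ'; cases θ' <;> simp [gcode, Nat.pair_eq_pair]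
                  exact fun h1 h2 => ⟨ATerm.gcode_inj _ _ h1, ih _ h2⟩
/-! ### A code-level evaluator -/

lemma unpair21_lt (m : ℕ) : m.unpair.2.unpair.1 < m + 1 := by
  have := Nat.unpair_left_le m.unpair.2; have := Nat.unpair_right_le m; omega

lemma unpair22_lt (m : ℕ) : m.unpair.2.unpair.2 < m + 1 := by
  have := Nat.unpair_right_le m.unpair.2; have := Nat.unpair_right_le m; omega

lemma unpair2_lt (m : ℕ) : m.unpair.2 < m + 1 := by
  have := Nat.unpair_right_le m; omega

def termEval (l : List ℕ) : ℕ → ℕ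
  | 0 => 0
  | (m+1) =>
    if m.unpair.1 = 0 then 0
    else if m.unpair.1 = 1 then 1
    else if m.unpair.1 = 2 then l.getD m.unpair.2 0
    else if m.unpair.1 = 3 then termEval l m.unpair.2.unpair.1 + termEval l m.unpair.2.unpair.2
    else if m.unpair.1 = 4 then termEval l m.unpair.2.unpair.1 * termEval l m.unpair.2.unpair.2
    else 0
  termination_by c => c
  decreasing_by
  · exact unpair21_lt m
  · exact unpair22_lt m
  · exact unpair21_lt m
  · exact unpair22_lt m

lemma getD_ofFn {n : ℕ} (v : Fin n → ℕ) (i : Fin n) : (List.ofFn v).getD (i : ℕ) 0 = v i := by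
  rw [List.getD_eq_getElem?_getD]
  simp [List.getElem?_ofFn, i.isLt]

lemma termEval_gcode : ∀ {n} (t : ATerm n) (v : Fin n → ℕ),
    termEval (List.ofFn v) t.gcode = t.eval v := by
  intro n t v
  induction t with
  | zero => simp [ATerm.gcode, termEval, Nat.unpair_pair, ATerm.eval]
  | one => simp [ATerm.gcode, termEval, Nat.unpair_pair, ATerm.eval]
  | var i => simp [ATerm.gcode, termEval, Nat.unpair_pair, ATerm.eval, getD_ofFn]
  | add t s iht ihs => simp [ATerm.gcode, termEval, Nat.unpair_pair, ATerm.eval, iht, ihs]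
  | mul t s iht ihs => simp [ATerm.gcode, termEval, Nat.unpair_pair, ATerm.eval, iht, ihs]

/-! ### Context-size requirements (validity of codes) -/

def needT : ℕ → Option ℕ
  | 0 => none
  | (m+1) =>
    if m.unpair.1 = 0 then (if m.unpair.2 = 0 then some 0 else none)
    else if m.unpair.1 = 1 then (if m.unpair.2 = 0 then some 0 else none)
    else if m.unpair.1 = 2 then some (m.unpair.2 + 1)
    else if m.unpair.1 = 3 ∨ m.unpair.1 = 4 then
      (needT m.unpair.2.unpair.1).bind fun a => (needT m.unpair.2.unpair.2).map (max a)
    else none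
  termination_by c => c
  decreasing_by
  · exact unpair21_lt m
  · exact unpair22_lt m

def needF : ℕ → Option ℕ
  | 0 => none
  | (m+1) =>
    if m.unpair.1 = 0 ∨ m.unpair.1 = 1 then
      (needT m.unpair.2.unpair.1).bind fun a => (needT m.unpair.2.unpair.2).map (max a)
    else if m.unpair.1 = 2 then needF m.unpair.2
    else if m.unpair.1 = 3 ∨ m.unpair.1 = 4 ∨ m.unpair.1 = 5 then
      (needF m.unpair.2.unpair.1).bind fun a => (needF m.unpair.2.unpair.2).map (max a)
    else if m.unpair.1 = 6 ∨ m.unpair.1 = 7 then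
      (needT m.unpair.2.unpair.1).bind fun a => (needF m.unpair.2.unpair.2).map fun b => max a (b - 1)
    else none
  termination_by c => c
  decreasing_by
  · exact unpair2_lt m
  · exact unpair21_lt m
  · exact unpair22_lt m
  · exact unpair22_lt m

lemma needT_gcode : ∀ {n} (t : ATerm n), ∃ m, needT t.gcode = some m ∧ m ≤ n := by
  intro n t
  induction t with
  | zero => exact ⟨0, by simp [ATerm.gcode, needT, Nat.unpair_pair], Nat.zero_le _⟩
  | one => exact ⟨0, by simp [ATerm.gcode, needT, Nat.unpair_pair], Nat.zero_le _⟩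
  | var i => exact ⟨i + 1, by simp [ATerm.gcode, needT, Nat.unpair_pair], i.isLt⟩
  | add t s iht ihs =>
      obtain ⟨a, ha, han⟩ := iht; obtain ⟨b, hb, hbn⟩ := ihs
      exact ⟨max a b, by simp [ATerm.gcode, needT, Nat.unpair_pair, ha, hb], by omega⟩
  | mul t s iht ihs =>
      obtain ⟨a, ha, han⟩ := iht; obtain ⟨b, hb, hbn⟩ := ihs
      exact ⟨max a b, by simp [ATerm.gcode, needT, Nat.unpair_pair, ha, hb], by omega⟩

lemma needF_gcode : ∀ {n} (θ : Delta0 n), ∃ m, needF θ.gcode = some m ∧ m ≤ n := by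
  intro n θ
  induction θ with
  | eq t s =>
      obtain ⟨a, ha, han⟩ := needT_gcode t; obtain ⟨b, hb, hbn⟩ := needT_gcode s
      exact ⟨max a b, by simp [Delta0.gcode, needF, Nat.unpair_pair, ha, hb], by omega⟩
  | le t s =>
      obtain ⟨a, ha, han⟩ := needT_gcode t; obtain ⟨b, hb, hbn⟩ := needT_gcode s
      exact ⟨max a b, by simp [Delta0.gcode, needF, Nat.unpair_pair, ha, hb], by omega⟩
  | not φ ih =>
      obtain ⟨a, ha, han⟩ := ih
      exact ⟨a, by simp [Delta0.gcode, needF, Nat.unpair_pair, ha], han⟩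
  | and φ ψ ihφ ihψ =>
      obtain ⟨a, ha, han⟩ := ihφ; obtain ⟨b, hb, hbn⟩ := ihψ
      exact ⟨max a b, by simp [Delta0.gcode, needF, Nat.unpair_pair, ha, hb], by omega⟩
  | or φ ψ ihφ ihψ =>
      obtain ⟨a, ha, han⟩ := ihφ; obtain ⟨b, hb, hbn⟩ := ihψ
      exact ⟨max a b, by simp [Delta0.gcode, needF, Nat.unpair_pair, ha, hb], by omega⟩
  | imp φ ψ ihφ ihψ =>
      obtain ⟨a, ha, han⟩ := ihφ; obtain ⟨b, hb, hbn⟩ := ihψ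
      exact ⟨max a b, by simp [Delta0.gcode, needF, Nat.unpair_pair, ha, hb], by omega⟩
  | ball t φ ih =>
      obtain ⟨a, ha, han⟩ := needT_gcode t; obtain ⟨b, hb, hbn⟩ := ih
      exact ⟨max a (b-1), by simp [Delta0.gcode, needF, Nat.unpair_pair, ha, hb], by omega⟩
  | bex t φ ih =>
      obtain ⟨a, ha, han⟩ := needT_gcode t; obtain ⟨b, hb, hbn⟩ := ih
      exact ⟨max a (b-1), by simp [Delta0.gcode, needF, Nat.unpair_pair, ha, hb], by omega⟩

lemma needT_sound : ∀ (c : ℕ) {n m : ℕ}, needT c = some m → m ≤ n → ∃ t : ATerm n, t.gcode = c := by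
  intro c
  induction c using Nat.strong_induction_on with
  | _ c ih =>
    match c with
    | 0 => intro n m h; simp [needT] at h
    | (m'+1) =>
      intro n m h hle
      have hp := Nat.pair_unpair m'
      have hp2 := Nat.pair_unpair m'.unpair.2
      rw [needT] at h
      split_ifs at h with h0 h01 h1 h11 h2 h34
      · rw [h0, h01] at hp
        exact ⟨.zero, by simp [ATerm.gcode, hp]⟩
      · rw [h1, h11] at hp
        exact ⟨.one, by simp [ATerm.gcode, hp]⟩
      · rw [h2] at hp
        refine ⟨.var ⟨m'.unpair.2, ?_⟩, by simp [ATerm.gcode, hp]⟩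
        simp at h; omega
      · obtain ⟨a, ha, b, hb, hab⟩ := by
          simpa [Option.bind_eq_some_iff, Option.map_eq_some_iff] using h
        obtain ⟨t1, ht1⟩ := ih _ (unpair21_lt m') ha (le_trans (le_max_left a b) (hab ▸ hle))
        obtain ⟨t2, ht2⟩ := ih _ (unpair22_lt m') hb (le_trans (le_max_right a b) (hab ▸ hle))
        rcases h34 with h3 | h4
        · rw [h3] at hp
          exact ⟨.add t1 t2, by simp [ATerm.gcode, ht1, ht2, hp2, hp]⟩
        · rw [h4] at hp
          exact ⟨.mul t1 t2, by simp [ATerm.gcode, ht1, ht2, hp2, hp]⟩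

lemma needF_sound : ∀ (c : ℕ) {n m : ℕ}, needF c = some m → m ≤ n → ∃ θ : Delta0 n, θ.gcode = c := by
  intro c
  induction c using Nat.strong_induction_on with
  | _ c ih =>
    match c with
    | 0 => intro n m h; simp [needF] at h
    | (m'+1) =>
      intro n m h hle
      have hp := Nat.pair_unpair m'
      have hp2 := Nat.pair_unpair m'.unpair.2
      rw [needF] at h
      split_ifs at h with h01 h2 h345 h67
      · obtain ⟨a, ha, b, hb, hab⟩ := by
          simpa [Option.bind_eq_some_iff, Option.map_eq_some_iff] using h
        obtain ⟨t1, ht1⟩ := needT_sound _ ha (le_trans (le_max_left a b) (hab ▸ hle))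
        obtain ⟨t2, ht2⟩ := needT_sound _ hb (le_trans (le_max_right a b) (hab ▸ hle))
        rcases h01 with h0 | h1
        · rw [h0] at hp
          exact ⟨.eq t1 t2, by simp [Delta0.gcode, ht1, ht2, hp2, hp]⟩
        · rw [h1] at hp
          exact ⟨.le t1 t2, by simp [Delta0.gcode, ht1, ht2, hp2, hp]⟩
      · obtain ⟨φ, hφ⟩ := ih _ (unpair2_lt m') h hle
        rw [h2] at hp
        exact ⟨.not φ, by simp [Delta0.gcode, hφ, hp]⟩
      · obtain ⟨a, ha, b, hb, hab⟩ := by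
          simpa [Option.bind_eq_some_iff, Option.map_eq_some_iff] using h
        obtain ⟨φ, hφ⟩ := ih _ (unpair21_lt m') ha (le_trans (le_max_left a b) (hab ▸ hle))
        obtain ⟨ψ, hψ⟩ := ih _ (unpair22_lt m') hb (le_trans (le_max_right a b) (hab ▸ hle))
        rcases h345 with h3 | h4 | h5
        · rw [h3] at hp
          exact ⟨.and φ ψ, by simp [Delta0.gcode, hφ, hψ, hp2, hp]⟩
        · rw [h4] at hp
          exact ⟨.or φ ψ, by simp [Delta0.gcode, hφ, hψ, hp2, hp]⟩
        · rw [h5] at hp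
          exact ⟨.imp φ ψ, by simp [Delta0.gcode, hφ, hψ, hp2, hp]⟩
      · obtain ⟨a, ha, b, hb, hab⟩ := by
          simpa [Option.bind_eq_some_iff, Option.map_eq_some_iff] using h
        obtain ⟨t1, ht1⟩ := needT_sound _ ha (le_trans (le_max_left a (b-1)) (hab ▸ hle))
        have hb1 : b ≤ n + 1 := by
          have : b - 1 ≤ m := le_trans (le_max_right a (b-1)) (le_of_eq hab)
          omega
        obtain ⟨φ, hφ⟩ := ih _ (unpair22_lt m') hb hb1
        rcases h67 with h6 | h7
        · rw [h6] at hp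
          exact ⟨.ball t1 φ, by simp [Delta0.gcode, ht1, hφ, hp2, hp]⟩
        · rw [h7] at hp
          exact ⟨.bex t1 φ, by simp [Delta0.gcode, ht1, hφ, hp2, hp]⟩
/-! ### The satisfaction evaluator -/

def decodeL (V : ℕ) : List ℕ := (Encodable.decode (α := List ℕ) V).getD []

@[simp] lemma decodeL_encode (l : List ℕ) : decodeL (Encodable.encode l) = l := by
  simp [decodeL, Encodable.encodek]

lemma encode_cons (x : ℕ) (l : List ℕ) :
    Encodable.encode (x :: l) = Nat.pair x (Encodable.encode l) + 1 := by
  simp [Encodable.encode_list_cons]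

def lookupB (tab : List Bool) (q : ℕ) : Bool := tab.getD q false

def ballAux (tab : List Bool) (c V b : ℕ) : Bool :=
  (List.range (b+1)).foldr (fun x acc => lookupB tab (Nat.pair c (Nat.pair x V + 1)) && acc) true

def bexAux (tab : List Bool) (c V b : ℕ) : Bool :=
  (List.range (b+1)).foldr (fun x acc => lookupB tab (Nat.pair c (Nat.pair x V + 1)) || acc) false

lemma foldr_and_eq_true {α} (g : α → Bool) (l : List α) :
    (l.foldr (fun x acc => g x && acc) true = true) ↔ ∀ x ∈ l, g x = true := by
  induction l with
  | nil => simp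
  | cons a l ih => simp [ih]

lemma foldr_or_eq_true {α} (g : α → Bool) (l : List α) :
    (l.foldr (fun x acc => g x || acc) false = true) ↔ ∃ x ∈ l, g x = true := by
  induction l with
  | nil => simp
  | cons a l ih => simp [ih]

lemma ballAux_eq_true (tab c V b) :
    ballAux tab c V b = true ↔ ∀ x ≤ b, lookupB tab (Nat.pair c (Nat.pair x V + 1)) = true := by
  rw [ballAux, foldr_and_eq_true]
  constructor
  · intro h x hx; exact h x (List.mem_range.2 (by omega))
  · intro h x hx; exact h x (by have := List.mem_range.1 hx; omega)

lemma bexAux_eq_true (tab c V b) :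
    bexAux tab c V b = true ↔ ∃ x ≤ b, lookupB tab (Nat.pair c (Nat.pair x V + 1)) = true := by
  rw [bexAux, foldr_or_eq_true]
  constructor
  · rintro ⟨x, hx, h⟩; exact ⟨x, by have := List.mem_range.1 hx; omega, h⟩
  · rintro ⟨x, hx, h⟩; exact ⟨x, List.mem_range.2 (by omega), h⟩

def step (tab : List Bool) (p : ℕ) : Bool :=
  if p.unpair.1 = 0 then false else
  if (p.unpair.1 - 1).unpair.1 = 0 then
    decide (termEval (decodeL p.unpair.2) (p.unpair.1 - 1).unpair.2.unpair.1 =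
            termEval (decodeL p.unpair.2) (p.unpair.1 - 1).unpair.2.unpair.2)
  else if (p.unpair.1 - 1).unpair.1 = 1 then
    decide (termEval (decodeL p.unpair.2) (p.unpair.1 - 1).unpair.2.unpair.1 ≤
            termEval (decodeL p.unpair.2) (p.unpair.1 - 1).unpair.2.unpair.2)
  else if (p.unpair.1 - 1).unpair.1 = 2 then
    !(lookupB tab (Nat.pair (p.unpair.1 - 1).unpair.2 p.unpair.2))
  else if (p.unpair.1 - 1).unpair.1 = 3 then
    lookupB tab (Nat.pair (p.unpair.1 - 1).unpair.2.unpair.1 p.unpair.2) &&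
    lookupB tab (Nat.pair (p.unpair.1 - 1).unpair.2.unpair.2 p.unpair.2)
  else if (p.unpair.1 - 1).unpair.1 = 4 then
    lookupB tab (Nat.pair (p.unpair.1 - 1).unpair.2.unpair.1 p.unpair.2) ||
    lookupB tab (Nat.pair (p.unpair.1 - 1).unpair.2.unpair.2 p.unpair.2)
  else if (p.unpair.1 - 1).unpair.1 = 5 then
    !(lookupB tab (Nat.pair (p.unpair.1 - 1).unpair.2.unpair.1 p.unpair.2)) ||
    lookupB tab (Nat.pair (p.unpair.1 - 1).unpair.2.unpair.2 p.unpair.2)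
  else if (p.unpair.1 - 1).unpair.1 = 6 then
    ballAux tab (p.unpair.1 - 1).unpair.2.unpair.2 p.unpair.2
      (termEval (decodeL p.unpair.2) (p.unpair.1 - 1).unpair.2.unpair.1)
  else if (p.unpair.1 - 1).unpair.1 = 7 then
    bexAux tab (p.unpair.1 - 1).unpair.2.unpair.2 p.unpair.2
      (termEval (decodeL p.unpair.2) (p.unpair.1 - 1).unpair.2.unpair.1)
  else false

/-! ### Growth bounds -/

lemma pair_le_pair {a a' b b' : ℕ} (h1 : a ≤ a') (h2 : b ≤ b') :
    Nat.pair a b ≤ Nat.pair a' b' := by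
  simp only [Nat.pair]; split <;> split <;> nlinarith

lemma le_foldr_max (d : ℕ) (l : List ℕ) : d ≤ l.foldr max d := by
  induction l with
  | nil => simp
  | cons a l ih => simp only [List.foldr]; omega

lemma mem_le_foldr_max {a : ℕ} {l : List ℕ} (d : ℕ) (h : a ∈ l) : a ≤ l.foldr max d := by
  induction l with
  | nil => simp at h
  | cons b l ih =>

      rcases List.mem_cons.1 h with rfl | h'
      · simp only [List.foldr]; omega
      · have := ih h'; simp only [List.foldr]; omega

def callBound (p : ℕ) : ℕ :=
  max p (Nat.pair p.unpair.1
    (Nat.pair (((List.range p.unpair.1).map (termEval (decodeL p.unpair.2))).foldr max 0)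
      p.unpair.2 + 1))

def growBound (N : ℕ) : ℕ := ((List.range (N+1)).map callBound).foldr max N

lemma le_growBound (N : ℕ) : N ≤ growBound N := le_foldr_max _ _

lemma callBound_le_growBound {p N : ℕ} (h : p ≤ N) : callBound p ≤ growBound N :=
  mem_le_foldr_max _ (List.mem_map_of_mem (List.mem_range.2 (by omega)))

lemma foldr_max_le {l : List ℕ} {d K : ℕ} (h1 : d ≤ K) (h2 : ∀ a ∈ l, a ≤ K) :
    l.foldr max d ≤ K := by
  induction l with
  | nil => simpa
  | cons a l ih =>
      simp only [List.foldr]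
      have := h2 a (by simp)
      have := ih (fun a ha => h2 a (List.mem_cons_of_mem _ ha))
      omega

lemma growBound_mono {M N : ℕ} (h : M ≤ N) : growBound M ≤ growBound N := by
  refine foldr_max_le (le_trans h (le_growBound N)) ?_
  intro a ha
  obtain ⟨p, hp, rfl⟩ := List.mem_map.1 ha
  exact callBound_le_growBound (by have := List.mem_range.1 hp; omega)

def gIter : ℕ → ℕ → ℕ
  | 0, p => p
  | (f+1), p => growBound (gIter f p)

lemma gIter_succ' (f p : ℕ) : gIter (f+1) p = gIter f (growBound p) := by
  induction f generalizing p with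
  | zero => rfl
  | succ f ih => show growBound (gIter (f+1) p) = growBound (gIter f (growBound p)); rw [ih]

lemma gIter_mono (f : ℕ) {p q : ℕ} (h : p ≤ q) : gIter f p ≤ gIter f q := by
  induction f with
  | zero => exact h
  | succ f ih => exact growBound_mono ih

lemma le_gIter (f p : ℕ) : p ≤ gIter f p := by
  induction f with
  | zero => exact le_rfl
  | succ f ih => exact le_trans ih (le_growBound _)

lemma gIter_child {f N p q : ℕ} (hq : q ≤ callBound p) (h : gIter (f+1) p ≤ N) :
    gIter f q ≤ N := by
  refine le_trans (gIter_mono f (le_trans hq (callBound_le_growBound le_rfl))) ?_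
  rw [← gIter_succ']; exact h

/-! ### The table -/

def tabAux (N : ℕ) : ℕ → List Bool
  | 0 => List.replicate (N+1) false
  | (f+1) => (List.range (N+1)).map (step (tabAux N f))

lemma getD_map_range {α} (g : ℕ → α) (d : α) {i n : ℕ} (h : i < n) :
    ((List.range n).map g).getD i d = g i := by
  rw [List.getD_eq_getElem?_getD]
  simp [List.getElem?_map, List.getElem?_range h]

def satEval (c V : ℕ) : Bool := lookupB (tabAux (gIter c (Nat.pair c V)) c) (Nat.pair c V)
/-! ### Correctness of the evaluator -/

lemma gcode_pos {n} (θ : Delta0 n) : 1 ≤ θ.gcode := by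
  cases θ <;> exact Nat.succ_le_succ (Nat.zero_le _)

lemma bnot_iff (b : Bool) : ((!b) = true) ↔ ¬ (b = true) := by cases b <;> simp

lemma bimp_iff (a b : Bool) : ((!a || b) = true) ↔ (a = true → b = true) := by
  cases a <;> cases b <;> simp

section StepEq
variable (tab : List Bool) (V : ℕ) {n : ℕ}

lemma step_eq (t s : ATerm n) : step tab (Nat.pair (Delta0.eq t s).gcode V) =
    decide (termEval (decodeL V) t.gcode = termEval (decodeL V) s.gcode) := by
  simp [step, Delta0.gcode, Nat.unpair_pair, Nat.succ_sub_one]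

lemma step_le (t s : ATerm n) : step tab (Nat.pair (Delta0.le t s).gcode V) =
    decide (termEval (decodeL V) t.gcode ≤ termEval (decodeL V) s.gcode) := by
  simp [step, Delta0.gcode, Nat.unpair_pair, Nat.succ_sub_one]

lemma step_not (φ : Delta0 n) : step tab (Nat.pair (Delta0.not φ).gcode V) =
    !(lookupB tab (Nat.pair φ.gcode V)) := by
  simp [step, Delta0.gcode, Nat.unpair_pair, Nat.succ_sub_one]

lemma step_and (φ ψ : Delta0 n) : step tab (Nat.pair (Delta0.and φ ψ).gcode V) =
    (lookupB tab (Nat.pair φ.gcode V) && lookupB tab (Nat.pair ψ.gcode V)) := by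
  simp [step, Delta0.gcode, Nat.unpair_pair, Nat.succ_sub_one]

lemma step_or (φ ψ : Delta0 n) : step tab (Nat.pair (Delta0.or φ ψ).gcode V) =
    (lookupB tab (Nat.pair φ.gcode V) || lookupB tab (Nat.pair ψ.gcode V)) := by
  simp [step, Delta0.gcode, Nat.unpair_pair, Nat.succ_sub_one]

lemma step_imp (φ ψ : Delta0 n) : step tab (Nat.pair (Delta0.imp φ ψ).gcode V) =
    (!(lookupB tab (Nat.pair φ.gcode V)) || lookupB tab (Nat.pair ψ.gcode V)) := by
  simp [step, Delta0.gcode, Nat.unpair_pair, Nat.succ_sub_one]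

lemma step_ball (t : ATerm n) (φ : Delta0 (n+1)) :
    step tab (Nat.pair (Delta0.ball t φ).gcode V) =
      ballAux tab φ.gcode V (termEval (decodeL V) t.gcode) := by
  simp [step, Delta0.gcode, Nat.unpair_pair, Nat.succ_sub_one]

lemma step_bex (t : ATerm n) (φ : Delta0 (n+1)) :
    step tab (Nat.pair (Delta0.bex t φ).gcode V) =
      bexAux tab φ.gcode V (termEval (decodeL V) t.gcode) := by
  simp [step, Delta0.gcode, Nat.unpair_pair, Nat.succ_sub_one]

end StepEq

lemma child_same {c c' V f N : ℕ} (h : c' ≤ c) (hN : gIter (f+1) (Nat.pair c V) ≤ N) :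
    gIter f (Nat.pair c' V) ≤ N := by
  apply gIter_child ?_ hN
  unfold callBound
  simp only [Nat.unpair_pair]
  refine le_trans (pair_le_pair h ?_) (le_max_right _ _)
  have := Nat.right_le_pair (((List.range c).map (termEval (decodeL V))).foldr max 0) V
  omega

lemma child_cons {c c' t x V f N : ℕ} (h : c' ≤ c) (ht : t < c)
    (hx : x ≤ termEval (decodeL V) t) (hN : gIter (f+1) (Nat.pair c V) ≤ N) :
    gIter f (Nat.pair c' (Nat.pair x V + 1)) ≤ N := by
  apply gIter_child ?_ hN
  unfold callBound
  simp only [Nat.unpair_pair]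
  have hX : termEval (decodeL V) t ≤ ((List.range c).map (termEval (decodeL V))).foldr max 0 :=
    mem_le_foldr_max 0 (List.mem_map_of_mem (List.mem_range.2 ht))
  refine le_trans (pair_le_pair h ?_) (le_max_right _ _)
  have := pair_le_pair (le_trans hx hX) (le_refl V)
  omega

lemma encode_ofFn_cons {n} (x : ℕ) (v : Fin n → ℕ) :
    Encodable.encode (List.ofFn (Fin.cons x v)) =
      Nat.pair x (Encodable.encode (List.ofFn v)) + 1 := by
  rw [List.ofFn_succ]
  simp [encode_cons]

lemma sub_le_gcode_not {n} (φ : Delta0 n) : φ.gcode < (Delta0.not φ).gcode := by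
  simp only [Delta0.gcode]; have := Nat.right_le_pair 2 φ.gcode; omega

lemma lt_pair_succ_left (k a b : ℕ) : a < Nat.pair k (Nat.pair a b) + 1 := by
  have := Nat.right_le_pair k (Nat.pair a b)
  have := Nat.left_le_pair a b; omega

lemma lt_pair_succ_right (k a b : ℕ) : b < Nat.pair k (Nat.pair a b) + 1 := by
  have := Nat.right_le_pair k (Nat.pair a b)
  have := Nat.right_le_pair a b; omega

lemma tabAux_correct : ∀ (f : ℕ) {n} (θ : Delta0 n) (N : ℕ) (v : Fin n → ℕ),
    θ.gcode ≤ f → gIter f (Nat.pair θ.gcode (Encodable.encode (List.ofFn v))) ≤ N →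
    (lookupB (tabAux N f) (Nat.pair θ.gcode (Encodable.encode (List.ofFn v))) = true ↔ θ.Sat v) := by
  intro f
  induction f with
  | zero => intro n θ N v hc _; exact absurd hc (by have := gcode_pos θ; omega)
  | succ f ih =>
    intro n θ N v hc hN
    have hpN : Nat.pair θ.gcode (Encodable.encode (List.ofFn v)) ≤ N :=
      le_trans (le_gIter _ _) hN
    rw [show tabAux N (f+1) = (List.range (N+1)).map (step (tabAux N f)) from rfl,
      lookupB, getD_map_range _ _ (by omega)]
    cases θ with
    | eq t s =>
        rw [step_eq]
        simp [Delta0.Sat, termEval_gcode]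
    | le t s =>
        rw [step_le]
        simp [Delta0.Sat, termEval_gcode]
    | not φ =>
        have hlt := sub_le_gcode_not φ
        rw [step_not, bnot_iff, ih φ N v (by omega) (child_same (le_of_lt hlt) hN)]
        simp [Delta0.Sat]
    | and φ ψ =>
        have hlφ : φ.gcode < (Delta0.and φ ψ).gcode := by simp only [Delta0.gcode]; exact lt_pair_succ_left 3 φ.gcode ψ.gcode
        have hlψ : ψ.gcode < (Delta0.and φ ψ).gcode := by simp only [Delta0.gcode]; exact lt_pair_succ_right 3 φ.gcode ψ.gcode
        rw [step_and, Bool.and_eq_true,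
          ih φ N v (by omega) (child_same (le_of_lt hlφ) hN),
          ih ψ N v (by omega) (child_same (le_of_lt hlψ) hN)]
        simp [Delta0.Sat]
    | or φ ψ =>
        have hlφ : φ.gcode < (Delta0.or φ ψ).gcode := by simp only [Delta0.gcode]; exact lt_pair_succ_left 4 φ.gcode ψ.gcode
        have hlψ : ψ.gcode < (Delta0.or φ ψ).gcode := by simp only [Delta0.gcode]; exact lt_pair_succ_right 4 φ.gcode ψ.gcode
        rw [step_or, Bool.or_eq_true,
          ih φ N v (by omega) (child_same (le_of_lt hlφ) hN),
          ih ψ N v (by omega) (child_same (le_of_lt hlψ) hN)]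
        simp [Delta0.Sat]
    | imp φ ψ =>
        have hlφ : φ.gcode < (Delta0.imp φ ψ).gcode := by simp only [Delta0.gcode]; exact lt_pair_succ_left 5 φ.gcode ψ.gcode
        have hlψ : ψ.gcode < (Delta0.imp φ ψ).gcode := by simp only [Delta0.gcode]; exact lt_pair_succ_right 5 φ.gcode ψ.gcode
        rw [step_imp, bimp_iff,
          ih φ N v (by omega) (child_same (le_of_lt hlφ) hN),
          ih ψ N v (by omega) (child_same (le_of_lt hlψ) hN)]
        simp [Delta0.Sat]
    | ball t φ =>
        have hlφ : φ.gcode < (Delta0.ball t φ).gcode := by simp only [Delta0.gcode]; exact lt_pair_succ_right 6 t.gcode φ.gcode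
        have hlt : t.gcode < (Delta0.ball t φ).gcode := by simp only [Delta0.gcode]; exact lt_pair_succ_left 6 t.gcode φ.gcode
        rw [step_ball, ballAux_eq_true]
        show _ ↔ (∀ x ≤ t.eval v, φ.Sat (Fin.cons x v))
        rw [decodeL_encode, termEval_gcode]
        refine forall_congr' fun x => imp_congr_right fun hx => ?_
        have hchild := child_cons (x := x) (V := Encodable.encode (List.ofFn v))
          (le_of_lt hlφ) hlt (by rw [decodeL_encode, termEval_gcode]; exact hx) hN
        rw [← encode_ofFn_cons,
          ih φ N (Fin.cons x v) (by omega) (by rwa [encode_ofFn_cons])]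
    | bex t φ =>
        have hlφ : φ.gcode < (Delta0.bex t φ).gcode := by simp only [Delta0.gcode]; exact lt_pair_succ_right 7 t.gcode φ.gcode
        have hlt : t.gcode < (Delta0.bex t φ).gcode := by simp only [Delta0.gcode]; exact lt_pair_succ_left 7 t.gcode φ.gcode
        rw [step_bex, bexAux_eq_true]
        show _ ↔ (∃ x ≤ t.eval v, φ.Sat (Fin.cons x v))
        rw [decodeL_encode, termEval_gcode]
        refine exists_congr fun x => and_congr_right fun hx => ?_
        have hchild := child_cons (x := x) (V := Encodable.encode (List.ofFn v))
          (le_of_lt hlφ) hlt (by rw [decodeL_encode, termEval_gcode]; exact hx) hN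
        rw [← encode_ofFn_cons,
          ih φ N (Fin.cons x v) (by omega) (by rwa [encode_ofFn_cons])]

lemma satEval_correct {n} (θ : Delta0 n) (v : Fin n → ℕ) :
    satEval θ.gcode (Encodable.encode (List.ofFn v)) = true ↔ θ.Sat v :=
  tabAux_correct θ.gcode θ _ v le_rfl le_rfl
/-! ### Primitive recursiveness -/

def gTE (l : List ℕ) (h : List ℕ) : Option ℕ :=
  some (
    if h.length = 0 then 0 else
    if (h.length - 1).unpair.1 = 0 then 0
    else if (h.length - 1).unpair.1 = 1 then 1
    else if (h.length - 1).unpair.1 = 2 then l.getD (h.length - 1).unpair.2 0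
    else if (h.length - 1).unpair.1 = 3 then
      h.getD (h.length - 1).unpair.2.unpair.1 0 + h.getD (h.length - 1).unpair.2.unpair.2 0
    else if (h.length - 1).unpair.1 = 4 then
      h.getD (h.length - 1).unpair.2.unpair.1 0 * h.getD (h.length - 1).unpair.2.unpair.2 0
    else 0)

lemma primrec_gTE : Primrec₂ gTE := by
  unfold gTE
  have hlen : Primrec (fun q : List ℕ × List ℕ => q.2.length) :=
    Primrec.list_length.comp Primrec.snd
  have hm : Primrec (fun q : List ℕ × List ℕ => q.2.length - 1) :=
    Primrec.nat_sub.comp hlen (Primrec.const 1)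
  have htag : Primrec (fun q : List ℕ × List ℕ => (q.2.length - 1).unpair.1) :=
    Primrec.fst.comp (Primrec.unpair.comp hm)
  have hpl : Primrec (fun q : List ℕ × List ℕ => (q.2.length - 1).unpair.2) :=
    Primrec.snd.comp (Primrec.unpair.comp hm)
  have hpl1 : Primrec (fun q : List ℕ × List ℕ => (q.2.length - 1).unpair.2.unpair.1) :=
    Primrec.fst.comp (Primrec.unpair.comp hpl)
  have hpl2 : Primrec (fun q : List ℕ × List ℕ => (q.2.length - 1).unpair.2.unpair.2) :=
    Primrec.snd.comp (Primrec.unpair.comp hpl)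
  have hg1 : Primrec (fun q : List ℕ × List ℕ => q.2.getD (q.2.length - 1).unpair.2.unpair.1 0) :=
    (Primrec.list_getD 0).comp Primrec.snd hpl1
  have hg2 : Primrec (fun q : List ℕ × List ℕ => q.2.getD (q.2.length - 1).unpair.2.unpair.2 0) :=
    (Primrec.list_getD 0).comp Primrec.snd hpl2
  refine Primrec.option_some.comp ?_
  refine Primrec.ite (PrimrecRel.comp Primrec.eq hlen (Primrec.const 0)) (Primrec.const 0) ?_
  refine Primrec.ite (PrimrecRel.comp Primrec.eq htag (Primrec.const 0)) (Primrec.const 0) ?_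
  refine Primrec.ite (PrimrecRel.comp Primrec.eq htag (Primrec.const 1)) (Primrec.const 1) ?_
  refine Primrec.ite (PrimrecRel.comp Primrec.eq htag (Primrec.const 2))
    ((Primrec.list_getD 0).comp Primrec.fst hpl) ?_
  refine Primrec.ite (PrimrecRel.comp Primrec.eq htag (Primrec.const 3))
    (Primrec.nat_add.comp hg1 hg2) ?_
  exact Primrec.ite (PrimrecRel.comp Primrec.eq htag (Primrec.const 4))
    (Primrec.nat_mul.comp hg1 hg2) (Primrec.const 0)

lemma primrec_termEval : Primrec₂ termEval := by
  refine Primrec.nat_strong_rec termEval primrec_gTE ?_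
  intro l n
  cases n with
  | zero => simp [gTE, termEval]
  | succ m =>
      have e1 := getD_map_range (termEval l) 0 (unpair21_lt m)
      have e2 := getD_map_range (termEval l) 0 (unpair22_lt m)
      have e3 := getD_map_range (termEval l) 0 (unpair2_lt m)
      simp only [gTE, List.length_map, List.length_range, Nat.add_sub_cancel, e1, e2, e3,
        Nat.succ_ne_zero, if_false]
      rw [termEval]
def gNT (h : List (Option ℕ)) : Option (Option ℕ) :=
  some (
    if h.length = 0 then none else
    if (h.length - 1).unpair.1 = 0 then (if (h.length - 1).unpair.2 = 0 then some 0 else none)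
    else if (h.length - 1).unpair.1 = 1 then (if (h.length - 1).unpair.2 = 0 then some 0 else none)
    else if (h.length - 1).unpair.1 = 2 then some ((h.length - 1).unpair.2 + 1)
    else if (h.length - 1).unpair.1 = 3 ∨ (h.length - 1).unpair.1 = 4 then
      (h.getD (h.length - 1).unpair.2.unpair.1 none).bind fun a =>
        (h.getD (h.length - 1).unpair.2.unpair.2 none).map (max a)
    else none)

lemma primrec_gNT : Primrec gNT := by
  unfold gNT
  have hm : Primrec (fun h : List (Option ℕ) => h.length - 1) :=
    Primrec.nat_sub.comp Primrec.list_length (Primrec.const 1)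
  have htag : Primrec (fun h : List (Option ℕ) => (h.length - 1).unpair.1) :=
    Primrec.fst.comp (Primrec.unpair.comp hm)
  have hpl : Primrec (fun h : List (Option ℕ) => (h.length - 1).unpair.2) :=
    Primrec.snd.comp (Primrec.unpair.comp hm)
  have hpl1 : Primrec (fun h : List (Option ℕ) => (h.length - 1).unpair.2.unpair.1) :=
    Primrec.fst.comp (Primrec.unpair.comp hpl)
  have hpl2 : Primrec (fun h : List (Option ℕ) => (h.length - 1).unpair.2.unpair.2) :=
    Primrec.snd.comp (Primrec.unpair.comp hpl)
  have hbind : Primrec (fun h : List (Option ℕ) =>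
      (h.getD (h.length - 1).unpair.2.unpair.1 none).bind fun a =>
        (h.getD (h.length - 1).unpair.2.unpair.2 none).map (max a)) := by
    refine Primrec.option_bind ((Primrec.list_getD none).comp Primrec.id hpl1) ?_
    refine Primrec.option_map
      ((Primrec.list_getD none).comp Primrec.fst (hpl2.comp Primrec.fst)) ?_
    exact (Primrec.nat_max.comp (Primrec.snd.comp Primrec.fst) Primrec.snd).to₂
  refine Primrec.option_some.comp ?_
  refine Primrec.ite (PrimrecRel.comp Primrec.eq Primrec.list_length (Primrec.const 0))
    (Primrec.const none) ?_
  refine Primrec.ite (PrimrecRel.comp Primrec.eq htag (Primrec.const 0))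
    (Primrec.ite (PrimrecRel.comp Primrec.eq hpl (Primrec.const 0))
      (Primrec.const (some 0)) (Primrec.const none)) ?_
  refine Primrec.ite (PrimrecRel.comp Primrec.eq htag (Primrec.const 1))
    (Primrec.ite (PrimrecRel.comp Primrec.eq hpl (Primrec.const 0))
      (Primrec.const (some 0)) (Primrec.const none)) ?_
  refine Primrec.ite (PrimrecRel.comp Primrec.eq htag (Primrec.const 2))
    (Primrec.option_some.comp (Primrec.succ.comp hpl)) ?_
  exact Primrec.ite
    ((PrimrecRel.comp Primrec.eq htag (Primrec.const 3)).or
      (PrimrecRel.comp Primrec.eq htag (Primrec.const 4)))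
    hbind (Primrec.const none)

lemma primrec_needT : Primrec needT := by
  have h2 : Primrec₂ (fun (_ : Unit) (n : ℕ) => needT n) := by
    refine Primrec.nat_strong_rec _ (primrec_gNT.comp Primrec.snd).to₂ ?_
    intro _ n
    cases n with
    | zero => simp [gNT, needT]
    | succ m =>
        have e1 := getD_map_range needT none (unpair21_lt m)
        have e2 := getD_map_range needT none (unpair22_lt m)
        simp only [gNT, List.length_map, List.length_range, Nat.add_sub_cancel, e1, e2,
          Nat.succ_ne_zero, if_false]
        rw [needT]
  exact h2.comp (Primrec.const ()) Primrec.id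
def gNF (h : List (Option ℕ)) : Option (Option ℕ) :=
  some (
    if h.length = 0 then none else
    if (h.length - 1).unpair.1 = 0 ∨ (h.length - 1).unpair.1 = 1 then
      (needT (h.length - 1).unpair.2.unpair.1).bind fun a =>
        (needT (h.length - 1).unpair.2.unpair.2).map (max a)
    else if (h.length - 1).unpair.1 = 2 then h.getD (h.length - 1).unpair.2 none
    else if (h.length - 1).unpair.1 = 3 ∨ (h.length - 1).unpair.1 = 4 ∨
        (h.length - 1).unpair.1 = 5 then
      (h.getD (h.length - 1).unpair.2.unpair.1 none).bind fun a =>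
        (h.getD (h.length - 1).unpair.2.unpair.2 none).map (max a)
    else if (h.length - 1).unpair.1 = 6 ∨ (h.length - 1).unpair.1 = 7 then
      (needT (h.length - 1).unpair.2.unpair.1).bind fun a =>
        (h.getD (h.length - 1).unpair.2.unpair.2 none).map fun b => max a (b - 1)
    else none)

lemma primrec_gNF : Primrec gNF := by
  unfold gNF
  have hm : Primrec (fun h : List (Option ℕ) => h.length - 1) :=
    Primrec.nat_sub.comp Primrec.list_length (Primrec.const 1)
  have htag : Primrec (fun h : List (Option ℕ) => (h.length - 1).unpair.1) :=
    Primrec.fst.comp (Primrec.unpair.comp hm)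
  have hpl : Primrec (fun h : List (Option ℕ) => (h.length - 1).unpair.2) :=
    Primrec.snd.comp (Primrec.unpair.comp hm)
  have hpl1 : Primrec (fun h : List (Option ℕ) => (h.length - 1).unpair.2.unpair.1) :=
    Primrec.fst.comp (Primrec.unpair.comp hpl)
  have hpl2 : Primrec (fun h : List (Option ℕ) => (h.length - 1).unpair.2.unpair.2) :=
    Primrec.snd.comp (Primrec.unpair.comp hpl)
  have hb1 : Primrec (fun h : List (Option ℕ) =>
      (needT (h.length - 1).unpair.2.unpair.1).bind fun a =>
        (needT (h.length - 1).unpair.2.unpair.2).map (max a)) := by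
    refine Primrec.option_bind (primrec_needT.comp hpl1) ?_
    refine Primrec.option_map ((primrec_needT.comp hpl2).comp Primrec.fst) ?_
    exact (Primrec.nat_max.comp (Primrec.snd.comp Primrec.fst) Primrec.snd).to₂
  have hb3 : Primrec (fun h : List (Option ℕ) =>
      (h.getD (h.length - 1).unpair.2.unpair.1 none).bind fun a =>
        (h.getD (h.length - 1).unpair.2.unpair.2 none).map (max a)) := by
    refine Primrec.option_bind ((Primrec.list_getD none).comp Primrec.id hpl1) ?_
    refine Primrec.option_map
      ((Primrec.list_getD none).comp Primrec.fst (hpl2.comp Primrec.fst)) ?_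
    exact (Primrec.nat_max.comp (Primrec.snd.comp Primrec.fst) Primrec.snd).to₂
  have hb6 : Primrec (fun h : List (Option ℕ) =>
      (needT (h.length - 1).unpair.2.unpair.1).bind fun a =>
        (h.getD (h.length - 1).unpair.2.unpair.2 none).map fun b => max a (b - 1)) := by
    refine Primrec.option_bind (primrec_needT.comp hpl1) ?_
    refine Primrec.option_map
      ((Primrec.list_getD none).comp Primrec.fst (hpl2.comp Primrec.fst)) ?_
    exact (Primrec.nat_max.comp (Primrec.snd.comp Primrec.fst)
      (Primrec.nat_sub.comp Primrec.snd (Primrec.const 1))).to₂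
  refine Primrec.option_some.comp ?_
  refine Primrec.ite (PrimrecRel.comp Primrec.eq Primrec.list_length (Primrec.const 0))
    (Primrec.const none) ?_
  refine Primrec.ite
    ((PrimrecRel.comp Primrec.eq htag (Primrec.const 0)).or
      (PrimrecRel.comp Primrec.eq htag (Primrec.const 1))) hb1 ?_
  refine Primrec.ite (PrimrecRel.comp Primrec.eq htag (Primrec.const 2))
    ((Primrec.list_getD none).comp Primrec.id hpl) ?_
  refine Primrec.ite
    ((PrimrecRel.comp Primrec.eq htag (Primrec.const 3)).or
      ((PrimrecRel.comp Primrec.eq htag (Primrec.const 4)).or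
        (PrimrecRel.comp Primrec.eq htag (Primrec.const 5)))) hb3 ?_
  exact Primrec.ite
    ((PrimrecRel.comp Primrec.eq htag (Primrec.const 6)).or
      (PrimrecRel.comp Primrec.eq htag (Primrec.const 7))) hb6 (Primrec.const none)

lemma primrec_needF : Primrec needF := by
  have h2 : Primrec₂ (fun (_ : Unit) (n : ℕ) => needF n) := by
    refine Primrec.nat_strong_rec _ (primrec_gNF.comp Primrec.snd).to₂ ?_
    intro _ n
    cases n with
    | zero => simp [gNF, needF]
    | succ m =>
        have e1 := getD_map_range needF none (unpair21_lt m)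
        have e2 := getD_map_range needF none (unpair22_lt m)
        have e3 := getD_map_range needF none (unpair2_lt m)
        simp only [gNF, List.length_map, List.length_range, Nat.add_sub_cancel, e1, e2, e3,
          Nat.succ_ne_zero, if_false]
        rw [needF]
  exact h2.comp (Primrec.const ()) Primrec.id
lemma primrec_decodeL : Primrec decodeL :=
  Primrec.option_getD.comp (Primrec.decode (α := List ℕ)) (Primrec.const [])

lemma primrec_lookupB : Primrec₂ lookupB := Primrec.list_getD false

lemma primrec_ballAux {α} [Primcodable α] {f : α → List Bool} {g h b : α → ℕ}
    (hf : Primrec f) (hg : Primrec g) (hh : Primrec h) (hb : Primrec b) :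
    Primrec fun a => ballAux (f a) (g a) (h a) (b a) := by
  unfold ballAux
  have hH : Primrec₂ (fun (a : α) (p : ℕ × Bool) =>
      lookupB (f a) (Nat.pair (g a) (Nat.pair p.1 (h a) + 1)) && p.2) := by
    have hlkp : Primrec (fun x : α × (ℕ × Bool) =>
        lookupB (f x.1) (Nat.pair (g x.1) (Nat.pair x.2.1 (h x.1) + 1))) :=
      primrec_lookupB.comp (hf.comp Primrec.fst)
        (Primrec₂.natPair.comp (hg.comp Primrec.fst)
          (Primrec.succ.comp (Primrec₂.natPair.comp (Primrec.fst.comp Primrec.snd)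
            (hh.comp Primrec.fst))))
    exact ((Primrec.dom_bool₂ (· && ·)).comp hlkp (Primrec.snd.comp Primrec.snd)).to₂
  exact (Primrec.list_foldr (Primrec.list_range.comp (Primrec.succ.comp hb))
    (Primrec.const true) hH).of_eq fun a => rfl

lemma primrec_bexAux {α} [Primcodable α] {f : α → List Bool} {g h b : α → ℕ}
    (hf : Primrec f) (hg : Primrec g) (hh : Primrec h) (hb : Primrec b) :
    Primrec fun a => bexAux (f a) (g a) (h a) (b a) := by
  unfold bexAux
  have hH : Primrec₂ (fun (a : α) (p : ℕ × Bool) =>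
      lookupB (f a) (Nat.pair (g a) (Nat.pair p.1 (h a) + 1)) || p.2) := by
    have hlkp : Primrec (fun x : α × (ℕ × Bool) =>
        lookupB (f x.1) (Nat.pair (g x.1) (Nat.pair x.2.1 (h x.1) + 1))) :=
      primrec_lookupB.comp (hf.comp Primrec.fst)
        (Primrec₂.natPair.comp (hg.comp Primrec.fst)
          (Primrec.succ.comp (Primrec₂.natPair.comp (Primrec.fst.comp Primrec.snd)
            (hh.comp Primrec.fst))))
    exact ((Primrec.dom_bool₂ (· || ·)).comp hlkp (Primrec.snd.comp Primrec.snd)).to₂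
  exact (Primrec.list_foldr (Primrec.list_range.comp (Primrec.succ.comp hb))
    (Primrec.const false) hH).of_eq fun a => rfl

lemma primrec_step : Primrec₂ step := by
  unfold step
  have hc : Primrec (fun q : List Bool × ℕ => q.2.unpair.1) :=
    Primrec.fst.comp (Primrec.unpair.comp Primrec.snd)
  have hV : Primrec (fun q : List Bool × ℕ => q.2.unpair.2) :=
    Primrec.snd.comp (Primrec.unpair.comp Primrec.snd)
  have hl : Primrec (fun q : List Bool × ℕ => decodeL q.2.unpair.2) := primrec_decodeL.comp hV
  have hm : Primrec (fun q : List Bool × ℕ => q.2.unpair.1 - 1) :=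
    Primrec.nat_sub.comp hc (Primrec.const 1)
  have htag : Primrec (fun q : List Bool × ℕ => (q.2.unpair.1 - 1).unpair.1) :=
    Primrec.fst.comp (Primrec.unpair.comp hm)
  have hpl : Primrec (fun q : List Bool × ℕ => (q.2.unpair.1 - 1).unpair.2) :=
    Primrec.snd.comp (Primrec.unpair.comp hm)
  have hpl1 : Primrec (fun q : List Bool × ℕ => (q.2.unpair.1 - 1).unpair.2.unpair.1) :=
    Primrec.fst.comp (Primrec.unpair.comp hpl)
  have hpl2 : Primrec (fun q : List Bool × ℕ => (q.2.unpair.1 - 1).unpair.2.unpair.2) :=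
    Primrec.snd.comp (Primrec.unpair.comp hpl)
  have hte1 : Primrec (fun q : List Bool × ℕ =>
      termEval (decodeL q.2.unpair.2) (q.2.unpair.1 - 1).unpair.2.unpair.1) :=
    primrec_termEval.comp hl hpl1
  have hte2 : Primrec (fun q : List Bool × ℕ =>
      termEval (decodeL q.2.unpair.2) (q.2.unpair.1 - 1).unpair.2.unpair.2) :=
    primrec_termEval.comp hl hpl2
  have hlk : Primrec (fun q : List Bool × ℕ =>
      lookupB q.1 (Nat.pair (q.2.unpair.1 - 1).unpair.2 q.2.unpair.2)) :=
    primrec_lookupB.comp Primrec.fst (Primrec₂.natPair.comp hpl hV)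
  have hlk1 : Primrec (fun q : List Bool × ℕ =>
      lookupB q.1 (Nat.pair (q.2.unpair.1 - 1).unpair.2.unpair.1 q.2.unpair.2)) :=
    primrec_lookupB.comp Primrec.fst (Primrec₂.natPair.comp hpl1 hV)
  have hlk2 : Primrec (fun q : List Bool × ℕ =>
      lookupB q.1 (Nat.pair (q.2.unpair.1 - 1).unpair.2.unpair.2 q.2.unpair.2)) :=
    primrec_lookupB.comp Primrec.fst (Primrec₂.natPair.comp hpl2 hV)
  refine Primrec.ite (PrimrecRel.comp Primrec.eq hc (Primrec.const 0))
    (Primrec.const false) ?_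
  refine Primrec.ite (PrimrecRel.comp Primrec.eq htag (Primrec.const 0))
    (PrimrecRel.comp Primrec.eq hte1 hte2).decide ?_
  refine Primrec.ite (PrimrecRel.comp Primrec.eq htag (Primrec.const 1))
    (PrimrecRel.comp Primrec.nat_le hte1 hte2).decide ?_
  refine Primrec.ite (PrimrecRel.comp Primrec.eq htag (Primrec.const 2))
    ((Primrec.dom_bool (!·)).comp hlk) ?_
  refine Primrec.ite (PrimrecRel.comp Primrec.eq htag (Primrec.const 3))
    ((Primrec.dom_bool₂ (· && ·)).comp hlk1 hlk2) ?_
  refine Primrec.ite (PrimrecRel.comp Primrec.eq htag (Primrec.const 4))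
    ((Primrec.dom_bool₂ (· || ·)).comp hlk1 hlk2) ?_
  refine Primrec.ite (PrimrecRel.comp Primrec.eq htag (Primrec.const 5))
    ((Primrec.dom_bool₂ (· || ·)).comp ((Primrec.dom_bool (!·)).comp hlk1) hlk2) ?_
  refine Primrec.ite (PrimrecRel.comp Primrec.eq htag (Primrec.const 6))
    (primrec_ballAux Primrec.fst hpl2 hV hte1) ?_
  exact Primrec.ite (PrimrecRel.comp Primrec.eq htag (Primrec.const 7))
    (primrec_bexAux Primrec.fst hpl2 hV hte1) (Primrec.const false)

lemma primrec_callBound : Primrec callBound := by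
  unfold callBound
  have hc : Primrec (fun p : ℕ => p.unpair.1) := Primrec.fst.comp Primrec.unpair
  have hV : Primrec (fun p : ℕ => p.unpair.2) := Primrec.snd.comp Primrec.unpair
  have hlist : Primrec (fun p : ℕ =>
      (List.range p.unpair.1).map (termEval (decodeL p.unpair.2))) :=
    Primrec.list_map (Primrec.list_range.comp hc)
      (primrec_termEval.comp ((primrec_decodeL.comp hV).comp Primrec.fst) Primrec.snd).to₂
  have hfold : Primrec (fun p : ℕ =>
      ((List.range p.unpair.1).map (termEval (decodeL p.unpair.2))).foldr max 0) := by
    have hH : Primrec₂ (fun (_ : ℕ) (p : ℕ × ℕ) => max p.1 p.2) :=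
      (Primrec.nat_max.comp (Primrec.fst.comp Primrec.snd)
        (Primrec.snd.comp Primrec.snd)).to₂
    exact (Primrec.list_foldr hlist (Primrec.const 0) hH).of_eq fun a => rfl
  exact Primrec.nat_max.comp Primrec.id
    (Primrec₂.natPair.comp hc
      (Primrec.succ.comp (Primrec₂.natPair.comp hfold hV)))

lemma primrec_growBound : Primrec growBound := by
  unfold growBound
  have hH : Primrec₂ (fun (_ : ℕ) (p : ℕ × ℕ) => max p.1 p.2) :=
    (Primrec.nat_max.comp (Primrec.fst.comp Primrec.snd)
      (Primrec.snd.comp Primrec.snd)).to₂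
  exact (Primrec.list_foldr
    (Primrec.list_map (Primrec.list_range.comp Primrec.succ)
      (primrec_callBound.comp Primrec.snd).to₂) Primrec.id hH).of_eq fun a => rfl
lemma primrec_gIter : Primrec₂ (fun p f => gIter f p) := by
  have h := Primrec.nat_rec (f := fun p : ℕ => p) (g := fun (_ : ℕ) (q : ℕ × ℕ) => growBound q.2)
    Primrec.id (primrec_growBound.comp (Primrec.snd.comp Primrec.snd)).to₂
  refine h.of_eq fun p f => ?_
  induction f with
  | zero => rfl
  | succ f ihf => simp only [gIter]; rw [← ihf]

lemma primrec_replicate_false : Primrec (fun N : ℕ => List.replicate N (false : Bool)) := by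
  have h := Primrec.nat_rec₁ (f := fun (_ : ℕ) (ih : List Bool) => false :: ih) []
    ((Primrec.list_cons.comp (Primrec.const false) Primrec.snd).to₂)
  refine h.of_eq fun n => ?_
  induction n with
  | zero => rfl
  | succ n ihn => simp only [List.replicate]; rw [← ihn]

lemma primrec_tabAux : Primrec₂ tabAux := by
  have h := Primrec.nat_rec (f := fun N : ℕ => List.replicate (N+1) (false : Bool))
    (g := fun (N : ℕ) (q : ℕ × List Bool) => (List.range (N+1)).map (step q.2))
    (primrec_replicate_false.comp Primrec.succ) ?hg
  case hg =>
    exact (Primrec.list_map (Primrec.list_range.comp (Primrec.succ.comp Primrec.fst))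
      ((primrec_step.comp (Primrec.snd.comp (Primrec.snd.comp Primrec.fst))
        Primrec.snd).to₂)).to₂
  refine h.of_eq fun N f => ?_
  induction f with
  | zero => rfl
  | succ f ihf => simp only [tabAux]; rw [← ihf]

lemma primrec_satEval : Primrec₂ satEval := by
  unfold satEval
  have hp : Primrec (fun q : ℕ × ℕ => Nat.pair q.1 q.2) :=
    Primrec₂.natPair.comp Primrec.fst Primrec.snd
  exact (primrec_lookupB.comp
    (primrec_tabAux.comp (primrec_gIter.comp hp (Primrec.fst)) Primrec.fst) hp).to₂
/-! ### The universal relation -/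

def checkF (n c : ℕ) : Bool := decide ((needF c).getD (n+1) ≤ n)

lemma checkF_iff (n c : ℕ) : checkF n c = true ↔ ∃ m, needF c = some m ∧ m ≤ n := by
  rw [checkF, decide_eq_true_iff]
  cases h : needF c with
  | none => simp
  | some m => simp

def encListConst : ℕ → ℕ → ℕ
  | 0, _ => 0
  | (k+1), a => Nat.pair a (encListConst k a) + 1

lemma encListConst_eq (k a : ℕ) :
    encListConst k a = Encodable.encode (List.ofFn (fun _ : Fin k => a)) := by
  induction k with
  | zero => rfl
  | succ k ihk =>
      rw [List.ofFn_succ]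
      show Nat.pair a (encListConst k a) + 1 = _
      rw [encode_cons, ihk]

def Rrel (x a : ℕ) : Bool :=
  checkF x.unpair.1 x.unpair.2 && satEval x.unpair.2 (encListConst x.unpair.1 a)

lemma Rrel_spec (x a : ℕ) : Rrel x a = true ↔
    ∃ (k : ℕ) (θ : Delta0 k), Nat.pair k θ.gcode = x ∧ θ.Sat fun _ => a := by
  rw [Rrel, Bool.and_eq_true]
  constructor
  · rintro ⟨h1, h2⟩
    obtain ⟨m, hm, hmn⟩ := (checkF_iff _ _).1 h1
    obtain ⟨θ, hθ⟩ := needF_sound _ hm hmn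
    refine ⟨x.unpair.1, θ, by rw [hθ, Nat.pair_unpair], ?_⟩
    rw [encListConst_eq, ← hθ] at h2
    exact (satEval_correct θ _).1 h2
  · rintro ⟨k, θ, rfl, hsat⟩
    simp only [Nat.unpair_pair]
    obtain ⟨m, hm, hmn⟩ := needF_gcode θ
    refine ⟨(checkF_iff _ _).2 ⟨m, hm, hmn⟩, ?_⟩
    rw [encListConst_eq]
    exact (satEval_correct θ _).2 hsat

lemma primrec_checkF : Primrec₂ checkF := by
  unfold checkF
  exact (PrimrecRel.comp Primrec.nat_le
    (Primrec.option_getD.comp (primrec_needF.comp Primrec.snd) (Primrec.succ.comp Primrec.fst))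
    Primrec.fst).decide.to₂

lemma primrec_encListConst : Primrec₂ encListConst := by
  have h := Primrec.nat_rec (f := fun _ : ℕ => (0 : ℕ))
    (g := fun (a : ℕ) (q : ℕ × ℕ) => Nat.pair a q.2 + 1)
    (Primrec.const 0)
    ((Primrec.succ.comp (Primrec₂.natPair.comp Primrec.fst
      (Primrec.snd.comp Primrec.snd))).to₂)
  have h' : Primrec₂ fun (a k : ℕ) => encListConst k a := by
    refine h.of_eq fun a k => ?_
    induction k with
    | zero => rfl
    | succ k ihk => simp only [encListConst]; rw [← ihk]
  exact h'.comp Primrec.snd Primrec.fst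

lemma primrec_Rrel : Primrec₂ Rrel := by
  unfold Rrel
  have hk : Primrec (fun q : ℕ × ℕ => q.1.unpair.1) :=
    Primrec.fst.comp (Primrec.unpair.comp Primrec.fst)
  have hc : Primrec (fun q : ℕ × ℕ => q.1.unpair.2) :=
    Primrec.snd.comp (Primrec.unpair.comp Primrec.fst)
  exact ((Primrec.dom_bool₂ (· && ·)).comp
    (primrec_checkF.comp hk hc)
    (primrec_satEval.comp hc (primrec_encListConst.comp hk Primrec.snd))).to₂
/-! ### Diagonalization -/

lemma matrix_two_const (a : ℕ) (i : Fin 2) : ![a, a] i = a := by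
  fin_cases i <;> rfl

/-- There is a primitive recursive relation on `ℕ²` that is not definable by any Δ₀ formula
over the standard model of arithmetic; in particular the Δ₀-satisfaction relation
`Sat_{Δ₀} = {(⌜θ⌝, a) : θ ∈ Δ₀, ℕ ⊨ θ(a⃗)}` (for a suitable injective Gödel coding, where `a`
is substituted for every free variable of `θ`) is primitive recursive but not rudimentary. -/
theorem exists_primrec_not_delta0 :
    ∃ R : ℕ → ℕ → Bool,
      Primrec₂ R ∧
      (¬ ∃ φ : Delta0 2, ∀ x a : ℕ, R x a = true ↔ φ.Sat ![x, a]) ∧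
      (∃ code : (Σ k, Delta0 k) → ℕ, Function.Injective code ∧
        ∀ x a : ℕ, R x a = true ↔
          ∃ (k : ℕ) (θ : Delta0 k), code ⟨k, θ⟩ = x ∧ θ.Sat fun _ => a) := by
  refine ⟨Rrel, primrec_Rrel, ?_, ?_⟩
  · rintro ⟨φ, hφ⟩
    set ψ : Delta0 1 := φ.rename (fun _ => 0) with hψdef
    set χ : Delta0 1 := ψ.not with hχdef
    set x0 : ℕ := Nat.pair 1 χ.gcode with hx0
    have h1 : Rrel x0 x0 = true ↔ χ.Sat (fun _ => x0) := by
      rw [Rrel_spec]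
      constructor
      · rintro ⟨k, θ, hcode, hsat⟩
        rw [hx0, Nat.pair_eq_pair] at hcode
        obtain ⟨hk, hθ⟩ := hcode
        subst hk
        rwa [Delta0.gcode_inj θ χ hθ] at hsat
      · intro h; exact ⟨1, χ, rfl, h⟩
    have h2 : Rrel x0 x0 = true ↔ φ.Sat ![x0, x0] := hφ x0 x0
    have h3 : χ.Sat (fun _ => x0) ↔ ¬ ψ.Sat (fun _ => x0) := Iff.rfl
    have h4 : ψ.Sat (fun _ => x0) ↔ φ.Sat ![x0, x0] := by
      rw [hψdef, Delta0.sat_rename]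
      have : ((fun _ : Fin 1 => x0) ∘ fun _ : Fin 2 => (0 : Fin 1)) = ![x0, x0] := by
        funext i; rw [matrix_two_const]; rfl
      rw [this]
    rw [h3, h4, ← h2] at h1
    exact iff_not_self h1
  · refine ⟨fun s => Nat.pair s.1 s.2.gcode, ?_, ?_⟩
    · rintro ⟨k, θ⟩ ⟨k', θ'⟩ h
      simp only [Nat.pair_eq_pair] at h
      obtain ⟨hk, hθ⟩ := h
      subst hk
      rw [Delta0.gcode_inj θ θ' hθ]
    · intro x a; exact Rrel_spec x a
end

section
/- The Δ₀-satisfaction relation Sat_{Δ₀}(x, y) — holding when x is the Gödel code of a Δ₀ formula θ and ℕ ⊨ θ(y⃗) with y substituted for all free variables — is a primitive recursive relation. -/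
namespace SatD0


theorem lt_pair {a : ℕ} (ha : 1 ≤ a) (b : ℕ) : b < Nat.pair a b := by
  unfold Nat.pair; split <;> nlinarith

theorem add_le_pair (a b : ℕ) : a + b ≤ Nat.pair a b := by
  unfold Nat.pair; split <;> nlinarith

theorem add_two_le_pair {a : ℕ} (ha : 1 ≤ a) (b : ℕ) : b + 2 ≤ Nat.pair a b := by
  unfold Nat.pair; split <;> nlinarith

theorem unpair2_lt {c : ℕ} (h : 1 ≤ c.unpair.1) : c.unpair.2 < c := by
  conv_rhs => rw [← Nat.pair_unpair c]
  exact lt_pair h _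


end SatD0

namespace SatD0

/-- decidability of Sat -/
def decSat : ∀ {n} (θ : Delta0 n) (v : Fin n → ℕ), Decidable (θ.Sat v)
  | _, .eq t s, v => inferInstanceAs (Decidable (_ = _))
  | _, .le t s, v => inferInstanceAs (Decidable (_ ≤ _))
  | _, .not φ, v =>
      have := decSat φ v
      inferInstanceAs (Decidable (¬ _))
  | _, .and φ ψ, v =>
      have := decSat φ v; have := decSat ψ v
      inferInstanceAs (Decidable (_ ∧ _))
  | _, .or φ ψ, v =>
      have := decSat φ v; have := decSat ψ v
      inferInstanceAs (Decidable (_ ∨ _))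
  | _, .imp φ ψ, v =>
      have := decSat φ v; have := decSat ψ v
      inferInstanceAs (Decidable (_ → _))
  | _, .ball t φ, v =>
      have : ∀ x, Decidable (φ.Sat (Fin.cons x v)) := fun x => decSat φ _
      inferInstanceAs (Decidable (∀ x ≤ ATerm.eval t v, φ.Sat (Fin.cons x v)))
  | _, .bex t φ, v =>
      have : ∀ x, Decidable (φ.Sat (Fin.cons x v)) := fun x => decSat φ _
      inferInstanceAs (Decidable (∃ x ≤ ATerm.eval t v, φ.Sat (Fin.cons x v)))

instance {n} (θ : Delta0 n) (v : Fin n → ℕ) : Decidable (θ.Sat v) := decSat θ v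

/-- Gödel codes of terms -/
def tcode : ∀ {n}, ATerm n → ℕ
  | _, .zero => Nat.pair 0 0
  | _, .one => Nat.pair 1 0
  | _, .var i => Nat.pair 2 i
  | _, .add t s => Nat.pair 3 (Nat.pair (tcode t) (tcode s))
  | _, .mul t s => Nat.pair 4 (Nat.pair (tcode t) (tcode s))

/-- Gödel codes of formulas; the arity is stored at every node. -/
def fcode : ∀ {n}, Delta0 n → ℕ
  | k, .eq t s => Nat.pair k (Nat.pair 0 (Nat.pair (tcode t) (tcode s)))
  | k, .le t s => Nat.pair k (Nat.pair 1 (Nat.pair (tcode t) (tcode s)))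
  | k, .not φ => Nat.pair k (Nat.pair 2 (fcode φ))
  | k, .and φ ψ => Nat.pair k (Nat.pair 3 (Nat.pair (fcode φ) (fcode ψ)))
  | k, .or φ ψ => Nat.pair k (Nat.pair 4 (Nat.pair (fcode φ) (fcode ψ)))
  | k, .imp φ ψ => Nat.pair k (Nat.pair 5 (Nat.pair (fcode φ) (fcode ψ)))
  | k, .ball t φ => Nat.pair k (Nat.pair 6 (Nat.pair (tcode t) (fcode φ)))
  | k, .bex t φ => Nat.pair k (Nat.pair 7 (Nat.pair (tcode t) (fcode φ)))

theorem tcode_inj : ∀ {n} (t s : ATerm n), tcode t = tcode s → t = s := by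
  intro n t
  induction t with
  | zero => intro s; cases s <;> simp [tcode, Nat.pair_eq_pair]
  | one => intro s; cases s <;> simp [tcode, Nat.pair_eq_pair]
  | var i => intro s; cases s <;> simp [tcode, Nat.pair_eq_pair] <;> exact fun h => Fin.ext h
  | add t1 t2 ih1 ih2 =>
      intro s; cases s <;> simp [tcode, Nat.pair_eq_pair]
      exact fun h1 h2 => ⟨ih1 _ h1, ih2 _ h2⟩
  | mul t1 t2 ih1 ih2 =>
      intro s; cases s <;> simp [tcode, Nat.pair_eq_pair]
      exact fun h1 h2 => ⟨ih1 _ h1, ih2 _ h2⟩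

theorem fcode_inj : ∀ {n} (θ θ' : Delta0 n), fcode θ = fcode θ' → θ = θ' := by
  intro n θ
  induction θ with
  | eq t s =>
    intro θ'; cases θ' <;> simp [fcode, Nat.pair_eq_pair]
    exact fun h1 h2 => ⟨tcode_inj _ _ h1, tcode_inj _ _ h2⟩
  | le t s =>
    intro θ'; cases θ' <;> simp [fcode, Nat.pair_eq_pair]
    exact fun h1 h2 => ⟨tcode_inj _ _ h1, tcode_inj _ _ h2⟩
  | not φ ih =>
    intro θ'; cases θ' <;> simp [fcode, Nat.pair_eq_pair]
    exact ih _
  | and φ ψ ih1 ih2 =>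
    intro θ'; cases θ' <;> simp [fcode, Nat.pair_eq_pair]
    exact fun h1 h2 => ⟨ih1 _ h1, ih2 _ h2⟩
  | or φ ψ ih1 ih2 =>
    intro θ'; cases θ' <;> simp [fcode, Nat.pair_eq_pair]
    exact fun h1 h2 => ⟨ih1 _ h1, ih2 _ h2⟩
  | imp φ ψ ih1 ih2 =>
    intro θ'; cases θ' <;> simp [fcode, Nat.pair_eq_pair]
    exact fun h1 h2 => ⟨ih1 _ h1, ih2 _ h2⟩
  | ball t φ ih =>
    intro θ'; cases θ' <;> simp [fcode, Nat.pair_eq_pair]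
    exact fun h1 h2 => ⟨tcode_inj _ _ h1, ih _ h2⟩
  | bex t φ ih =>
    intro θ'; cases θ' <;> simp [fcode, Nat.pair_eq_pair]
    exact fun h1 h2 => ⟨tcode_inj _ _ h1, ih _ h2⟩

theorem fcode_fst : ∀ {n} (θ : Delta0 n), (fcode θ).unpair.1 = n := by
  intro n θ; cases θ <;> simp [fcode]

end SatD0


namespace SatD0

set_option maxHeartbeats 1000000

/-- digit extraction in base B+1 -/
def dig (B e i : ℕ) : ℕ := e / (B+1)^i % (B+1)

/-- numeric evaluation of a coded term; `none` if the code is not a valid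
term code with variables `< k`. -/
def TE (B k e : ℕ) : ℕ → Option ℕ := fun c =>
  if _h0 : c.unpair.1 = 0 then (if c.unpair.2 = 0 then some 0 else none)
  else if _h1 : c.unpair.1 = 1 then (if c.unpair.2 = 0 then some 1 else none)
  else if _h2 : c.unpair.1 = 2 then (if c.unpair.2 < k then some (dig B e c.unpair.2) else none)
  else if _h3 : c.unpair.1 = 3 then
    (TE B k e c.unpair.2.unpair.1).bind fun a =>
      (TE B k e c.unpair.2.unpair.2).map fun b => a + b
  else if _h4 : c.unpair.1 = 4 then
    (TE B k e c.unpair.2.unpair.1).bind fun a =>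
      (TE B k e c.unpair.2.unpair.2).map fun b => a * b
  else none
termination_by c => c
decreasing_by
  all_goals refine lt_of_le_of_lt ?_ (unpair2_lt (by omega))
  · exact Nat.unpair_left_le _
  · exact Nat.unpair_right_le _
  · exact Nat.unpair_left_le _
  · exact Nat.unpair_right_le _

theorem TE_tcode {k : ℕ} (t : ATerm k) (B e : ℕ) :
    TE B k e (tcode t) = some (t.eval fun i => dig B e i) := by
  induction t with
  | zero => rw [TE]; simp [tcode, ATerm.eval]
  | one => rw [TE]; simp [tcode, ATerm.eval]
  | var i => rw [TE]; simp [tcode, ATerm.eval, i.isLt]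
  | add t s iht ihs => rw [TE]; simp [tcode, ATerm.eval, iht, ihs]
  | mul t s iht ihs => rw [TE]; simp [tcode, ATerm.eval, iht, ihs]

theorem TE_decode (B k e : ℕ) : ∀ c v, TE B k e c = some v →
    ∃ t : ATerm k, tcode t = c := by
  intro c
  induction c using Nat.strong_induction_on with
  | _ c ih =>
    intro v h
    have hc2 : c = Nat.pair c.unpair.1
        (Nat.pair c.unpair.2.unpair.1 c.unpair.2.unpair.2) := by
      rw [Nat.pair_unpair, Nat.pair_unpair]
    have hc1 : c = Nat.pair c.unpair.1 c.unpair.2 := (Nat.pair_unpair c).symm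
    rw [TE] at h
    split_ifs at h with h0 h0' h1 h1' h2 h2' h3 h4
    · refine ⟨.zero, ?_⟩
      rw [tcode]; conv_rhs => rw [hc1]
      rw [h0, h0']
    · refine ⟨.one, ?_⟩
      rw [tcode]; conv_rhs => rw [hc1]
      rw [h1, h1']
    · refine ⟨.var ⟨c.unpair.2, h2'⟩, ?_⟩
      rw [tcode]; conv_rhs => rw [hc1]
      rw [h2]
    · have hlt1 : c.unpair.2.unpair.1 < c :=
        lt_of_le_of_lt (Nat.unpair_left_le _) (unpair2_lt (by omega))
      have hlt2 : c.unpair.2.unpair.2 < c :=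
        lt_of_le_of_lt (Nat.unpair_right_le _) (unpair2_lt (by omega))
      simp only [Option.bind_eq_some_iff, Option.map_eq_some_iff] at h
      obtain ⟨a, ha, b, hb, -⟩ := h
      obtain ⟨t1, ht1⟩ := ih _ hlt1 _ ha
      obtain ⟨t2, ht2⟩ := ih _ hlt2 _ hb
      refine ⟨.add t1 t2, ?_⟩
      rw [tcode, ht1, ht2]; conv_rhs => rw [hc2]
      rw [h3]
    · have hlt1 : c.unpair.2.unpair.1 < c :=
        lt_of_le_of_lt (Nat.unpair_left_le _) (unpair2_lt (by omega))
      have hlt2 : c.unpair.2.unpair.2 < c :=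
        lt_of_le_of_lt (Nat.unpair_right_le _) (unpair2_lt (by omega))
      simp only [Option.bind_eq_some_iff, Option.map_eq_some_iff] at h
      obtain ⟨a, ha, b, hb, -⟩ := h
      obtain ⟨t1, ht1⟩ := ih _ hlt1 _ ha
      obtain ⟨t2, ht2⟩ := ih _ hlt2 _ hb
      refine ⟨.mul t1 t2, ?_⟩
      rw [tcode, ht1, ht2]; conv_rhs => rw [hc2]
      rw [h4]

end SatD0


namespace SatD0
set_option maxHeartbeats 2000000

/-- encode an assignment list in base B+1 -/
def enc (B : ℕ) : List ℕ → ℕ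
  | [] => 0
  | x :: l => x + (B+1) * enc B l

theorem enc_lt (B : ℕ) : ∀ l : List ℕ, (∀ a ∈ l, a ≤ B) → enc B l < (B+1)^l.length := by
  intro l
  induction l with
  | nil => simp [enc]
  | cons x l ih =>
    intro h
    have hx : x ≤ B := h x (by simp)
    have he : enc B l < (B+1)^l.length := ih fun a ha => h a (by simp [ha])
    have : x + (B+1) * enc B l < (B+1) * (enc B l + 1) := by nlinarith
    calc enc B (x :: l) = x + (B+1) * enc B l := rfl
      _ < (B+1) * (enc B l + 1) := this
      _ ≤ (B+1) * (B+1)^l.length := by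
          have : enc B l + 1 ≤ (B+1)^l.length := he
          exact Nat.mul_le_mul_left _ this
      _ = (B+1)^(x :: l).length := by rw [List.length_cons, pow_succ]; ring

theorem dig_enc (B : ℕ) : ∀ (l : List ℕ), (∀ a ∈ l, a ≤ B) →
    ∀ i, dig B (enc B l) i = l.getD i 0 := by
  intro l
  induction l with
  | nil => intro _ i; simp [enc, dig, Nat.zero_div]
  | cons x l ih =>
    intro h i
    have hx : x ≤ B := h x (by simp)
    cases i with
    | zero =>
      simp only [dig, pow_zero, Nat.div_one, enc, List.getD_cons_zero]
      rw [Nat.add_mul_mod_self_left, Nat.mod_eq_of_lt (by omega)]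
    | succ i =>
      have : dig B (enc B (x :: l)) (i+1) = dig B (enc B l) i := by
        simp only [dig, enc]
        rw [pow_succ, mul_comm ((B+1)^i) (B+1), ← Nat.div_div_eq_div_mul,
          Nat.add_mul_div_left _ _ (by omega : 0 < B+1),
          Nat.div_eq_of_lt (by omega : x < B+1), Nat.zero_add]
      rw [this, ih (fun a ha => h a (by simp [ha])) i, List.getD_cons_succ]

/-- assignment from a list -/
def va {k : ℕ} (l : List ℕ) : Fin k → ℕ := fun i => l.getD i 0

def bAnd (l : List Bool) : Bool := l.foldr (· && ·) true
def bOr (l : List Bool) : Bool := l.foldr (· || ·) false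

theorem bAnd_iff (l : List Bool) : bAnd l = true ↔ ∀ b ∈ l, b = true := by
  induction l with
  | nil => simp [bAnd]
  | cons x l ih => simp [bAnd, List.foldr] at ih ⊢; intro; exact ih

theorem bOr_iff (l : List Bool) : bOr l = true ↔ ∃ b ∈ l, b = true := by
  induction l with
  | nil => simp [bOr]
  | cons x l ih => simp [bOr, List.foldr] at ih ⊢; rw [ih]

theorem subf_lt {c : ℕ} (h : 1 ≤ c.unpair.2.unpair.1) : c.unpair.2.unpair.2 < c :=
  lt_of_lt_of_le (unpair2_lt h) (Nat.unpair_right_le c)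

theorem subf1_lt {c : ℕ} (h : 1 ≤ c.unpair.2.unpair.1) : c.unpair.2.unpair.2.unpair.1 < c :=
  lt_of_le_of_lt (Nat.unpair_left_le _) (subf_lt h)

theorem subf2_lt {c : ℕ} (h : 1 ≤ c.unpair.2.unpair.1) : c.unpair.2.unpair.2.unpair.2 < c :=
  lt_of_le_of_lt (Nat.unpair_right_le _) (subf_lt h)

/-- the table of truth values of a coded formula, over all assignments with
entries `≤ B`. -/
def FE (B : ℕ) : ℕ → List Bool := fun c =>
  if _h0 : c.unpair.2.unpair.1 = 0 then
    if (TE B c.unpair.1 0 c.unpair.2.unpair.2.unpair.1).isSome ∧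
        (TE B c.unpair.1 0 c.unpair.2.unpair.2.unpair.2).isSome then
      (List.range ((B+1)^c.unpair.1)).map fun e =>
        decide ((TE B c.unpair.1 e c.unpair.2.unpair.2.unpair.1).getD 0 =
          (TE B c.unpair.1 e c.unpair.2.unpair.2.unpair.2).getD 0)
    else []
  else if _h1 : c.unpair.2.unpair.1 = 1 then
    if (TE B c.unpair.1 0 c.unpair.2.unpair.2.unpair.1).isSome ∧
        (TE B c.unpair.1 0 c.unpair.2.unpair.2.unpair.2).isSome then
      (List.range ((B+1)^c.unpair.1)).map fun e =>
        decide ((TE B c.unpair.1 e c.unpair.2.unpair.2.unpair.1).getD 0 ≤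
          (TE B c.unpair.1 e c.unpair.2.unpair.2.unpair.2).getD 0)
    else []
  else if _h2 : c.unpair.2.unpair.1 = 2 then
    if c.unpair.2.unpair.2.unpair.1 = c.unpair.1 ∧
        (FE B c.unpair.2.unpair.2).length = (B+1)^c.unpair.1 then
      (List.range ((B+1)^c.unpair.1)).map fun e =>
        !((FE B c.unpair.2.unpair.2).getD e false)
    else []
  else if _h3 : c.unpair.2.unpair.1 = 3 then
    if c.unpair.2.unpair.2.unpair.1.unpair.1 = c.unpair.1 ∧
        c.unpair.2.unpair.2.unpair.2.unpair.1 = c.unpair.1 ∧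
        (FE B c.unpair.2.unpair.2.unpair.1).length = (B+1)^c.unpair.1 ∧
        (FE B c.unpair.2.unpair.2.unpair.2).length = (B+1)^c.unpair.1 then
      (List.range ((B+1)^c.unpair.1)).map fun e =>
        ((FE B c.unpair.2.unpair.2.unpair.1).getD e false &&
          (FE B c.unpair.2.unpair.2.unpair.2).getD e false)
    else []
  else if _h4 : c.unpair.2.unpair.1 = 4 then
    if c.unpair.2.unpair.2.unpair.1.unpair.1 = c.unpair.1 ∧
        c.unpair.2.unpair.2.unpair.2.unpair.1 = c.unpair.1 ∧
        (FE B c.unpair.2.unpair.2.unpair.1).length = (B+1)^c.unpair.1 ∧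
        (FE B c.unpair.2.unpair.2.unpair.2).length = (B+1)^c.unpair.1 then
      (List.range ((B+1)^c.unpair.1)).map fun e =>
        ((FE B c.unpair.2.unpair.2.unpair.1).getD e false ||
          (FE B c.unpair.2.unpair.2.unpair.2).getD e false)
    else []
  else if _h5 : c.unpair.2.unpair.1 = 5 then
    if c.unpair.2.unpair.2.unpair.1.unpair.1 = c.unpair.1 ∧
        c.unpair.2.unpair.2.unpair.2.unpair.1 = c.unpair.1 ∧
        (FE B c.unpair.2.unpair.2.unpair.1).length = (B+1)^c.unpair.1 ∧
        (FE B c.unpair.2.unpair.2.unpair.2).length = (B+1)^c.unpair.1 then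
      (List.range ((B+1)^c.unpair.1)).map fun e =>
        (!((FE B c.unpair.2.unpair.2.unpair.1).getD e false) ||
          (FE B c.unpair.2.unpair.2.unpair.2).getD e false)
    else []
  else if _h6 : c.unpair.2.unpair.1 = 6 then
    if (TE B c.unpair.1 0 c.unpair.2.unpair.2.unpair.1).isSome ∧
        c.unpair.2.unpair.2.unpair.2.unpair.1 = c.unpair.1 + 1 ∧
        (FE B c.unpair.2.unpair.2.unpair.2).length = (B+1)^(c.unpair.1+1) then
      (List.range ((B+1)^c.unpair.1)).map fun e =>
        bAnd ((List.range ((TE B c.unpair.1 e c.unpair.2.unpair.2.unpair.1).getD 0 + 1)).map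
          fun x => (FE B c.unpair.2.unpair.2.unpair.2).getD (x + (B+1) * e) false)
    else []
  else if _h7 : c.unpair.2.unpair.1 = 7 then
    if (TE B c.unpair.1 0 c.unpair.2.unpair.2.unpair.1).isSome ∧
        c.unpair.2.unpair.2.unpair.2.unpair.1 = c.unpair.1 + 1 ∧
        (FE B c.unpair.2.unpair.2.unpair.2).length = (B+1)^(c.unpair.1+1) then
      (List.range ((B+1)^c.unpair.1)).map fun e =>
        bOr ((List.range ((TE B c.unpair.1 e c.unpair.2.unpair.2.unpair.1).getD 0 + 1)).map
          fun x => (FE B c.unpair.2.unpair.2.unpair.2).getD (x + (B+1) * e) false)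
    else []
  else []
termination_by c => c
decreasing_by
  all_goals
    first
    | exact subf_lt (by omega)
    | exact subf1_lt (by omega)
    | exact subf2_lt (by omega)

end SatD0


namespace SatD0
set_option maxHeartbeats 2000000

theorem getD_map_range {α} (f : ℕ → α) (d : α) {i N : ℕ} (h : i < N) :
    ((List.range N).map f).getD i d = f i := by
  rw [List.getD_eq_getElem?_getD, List.getElem?_map, List.getElem?_range h]
  rfl

theorem bool_eq_decide {b : Bool} {p : Prop} [Decidable p] (h : b = true ↔ p) :
    b = decide p := by
  by_cases hp : p
  · simp [hp, h.mpr hp]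
  · have : ¬ b = true := fun hb => hp (h.mp hb)
    simp [hp, this]

theorem bAnd_map_range (n : ℕ) (P : ℕ → Prop) [DecidablePred P] :
    bAnd ((List.range (n+1)).map fun x => decide (P x)) = decide (∀ x ≤ n, P x) := by
  apply bool_eq_decide
  rw [bAnd_iff]
  constructor
  · intro h x hx
    have := h (decide (P x)) (List.mem_map.mpr ⟨x, List.mem_range.mpr (by omega), rfl⟩)
    exact of_decide_eq_true this
  · intro h b hb
    obtain ⟨x, hx, rfl⟩ := List.mem_map.mp hb
    exact decide_eq_true (h x (by have := List.mem_range.mp hx; omega))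

theorem bOr_map_range (n : ℕ) (P : ℕ → Prop) [DecidablePred P] :
    bOr ((List.range (n+1)).map fun x => decide (P x)) = decide (∃ x ≤ n, P x) := by
  apply bool_eq_decide
  rw [bOr_iff]
  constructor
  · intro ⟨b, hb, hbt⟩
    obtain ⟨x, hx, rfl⟩ := List.mem_map.mp hb
    exact ⟨x, by have := List.mem_range.mp hx; omega, of_decide_eq_true hbt⟩
  · intro ⟨x, hx, hp⟩
    exact ⟨decide (P x), List.mem_map.mpr ⟨x, List.mem_range.mpr (by omega), rfl⟩,
      decide_eq_true hp⟩

theorem va_cons {k : ℕ} (x : ℕ) (l : List ℕ) :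
    (va (x :: l) : Fin (k+1) → ℕ) = Fin.cons x (va l) := by
  funext i
  refine Fin.cases ?_ (fun j => ?_) i
  · simp [va]
  · simp only [va, Fin.cons_succ]
    rw [show ((j.succ : Fin (k+1)) : ℕ) = (j : ℕ) + 1 from rfl, List.getD_cons_succ]

theorem va_eq_dig {k B : ℕ} (l : List ℕ) (hB : ∀ a ∈ l, a ≤ B) :
    (fun i : Fin k => dig B (enc B l) ↑i) = va l := by
  funext i
  exact dig_enc B l hB ↑i

/-- adequacy of a bound B for evaluating a formula via tables -/
def Adeq (B : ℕ) : ∀ {k}, Delta0 k → (Fin k → ℕ) → Prop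
  | _, .eq _ _, _ => True
  | _, .le _ _, _ => True
  | _, .not φ, v => Adeq B φ v
  | _, .and φ ψ, v => Adeq B φ v ∧ Adeq B ψ v
  | _, .or φ ψ, v => Adeq B φ v ∧ Adeq B ψ v
  | _, .imp φ ψ, v => Adeq B φ v ∧ Adeq B ψ v
  | _, .ball t φ, v => ∀ x ≤ t.eval v, x ≤ B ∧ Adeq B φ (Fin.cons x v)
  | _, .bex t φ, v => ∀ x ≤ t.eval v, x ≤ B ∧ Adeq B φ (Fin.cons x v)

theorem FE_length {k : ℕ} (θ : Delta0 k) (B : ℕ) :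
    (FE B (fcode θ)).length = (B+1)^k := by
  induction θ with
  | eq t s => rw [FE]; simp [fcode, Nat.unpair_pair, TE_tcode]
  | le t s => rw [FE]; simp [fcode, Nat.unpair_pair, TE_tcode]
  | not φ ih => rw [FE]; simp [fcode, Nat.unpair_pair, fcode_fst, ih]
  | and φ ψ ih1 ih2 => rw [FE]; simp [fcode, Nat.unpair_pair, fcode_fst, ih1, ih2]
  | or φ ψ ih1 ih2 => rw [FE]; simp [fcode, Nat.unpair_pair, fcode_fst, ih1, ih2]
  | imp φ ψ ih1 ih2 => rw [FE]; simp [fcode, Nat.unpair_pair, fcode_fst, ih1, ih2]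
  | ball t φ ih => rw [FE]; simp [fcode, Nat.unpair_pair, fcode_fst, TE_tcode, ih]
  | bex t φ ih => rw [FE]; simp [fcode, Nat.unpair_pair, fcode_fst, TE_tcode, ih]

theorem FE_correct {k : ℕ} (θ : Delta0 k) : ∀ (B : ℕ) (l : List ℕ),
    l.length = k → (∀ a ∈ l, a ≤ B) → Adeq B θ (va l) →
    (FE B (fcode θ)).getD (enc B l) false = decide (θ.Sat (va l)) := by
  induction θ with
  | eq t s =>
    intro B l hlen hB _
    subst hlen
    have he : enc B l < (B+1)^l.length := enc_lt B l hB
    rw [FE]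
    simp only [fcode, Nat.unpair_pair]
    simp [TE_tcode]
    rw [List.getElem?_range he]
    simp only [Option.map_some, Option.getD_some]
    rw [va_eq_dig l hB]
    exact decide_eq_decide.mpr (by simp [Delta0.Sat])
  | le t s =>
    intro B l hlen hB _
    subst hlen
    have he : enc B l < (B+1)^l.length := enc_lt B l hB
    rw [FE]
    simp only [fcode, Nat.unpair_pair]
    simp [TE_tcode]
    rw [List.getElem?_range he]
    simp only [Option.map_some, Option.getD_some]
    rw [va_eq_dig l hB]
    exact decide_eq_decide.mpr (by simp [Delta0.Sat])
  | not φ ih =>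
    intro B l hlen hB ha
    subst hlen
    have he : enc B l < (B+1)^l.length := enc_lt B l hB
    rw [FE]
    simp only [fcode, Nat.unpair_pair]
    simp [fcode_fst, FE_length]
    rw [List.getElem?_range he]
    simp only [Option.map_some, Option.getD_some, ← List.getD_eq_getElem?_getD]
    rw [ih B l rfl hB ha]
    by_cases h : φ.Sat (va l) <;> simp [Delta0.Sat, h]
  | and φ ψ ih1 ih2 =>
    intro B l hlen hB ha
    subst hlen
    have he : enc B l < (B+1)^l.length := enc_lt B l hB
    rw [FE]
    simp only [fcode, Nat.unpair_pair]
    simp [fcode_fst, FE_length]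
    rw [List.getElem?_range he]
    simp only [Option.map_some, Option.getD_some, ← List.getD_eq_getElem?_getD]
    rw [ih1 B l rfl hB ha.1, ih2 B l rfl hB ha.2]
    by_cases h1 : φ.Sat (va l) <;> by_cases h2 : ψ.Sat (va l) <;> simp [Delta0.Sat, h1, h2]
  | or φ ψ ih1 ih2 =>
    intro B l hlen hB ha
    subst hlen
    have he : enc B l < (B+1)^l.length := enc_lt B l hB
    rw [FE]
    simp only [fcode, Nat.unpair_pair]
    simp [fcode_fst, FE_length]
    rw [List.getElem?_range he]
    simp only [Option.map_some, Option.getD_some, ← List.getD_eq_getElem?_getD]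
    rw [ih1 B l rfl hB ha.1, ih2 B l rfl hB ha.2]
    by_cases h1 : φ.Sat (va l) <;> by_cases h2 : ψ.Sat (va l) <;> simp [Delta0.Sat, h1, h2]
  | imp φ ψ ih1 ih2 =>
    intro B l hlen hB ha
    subst hlen
    have he : enc B l < (B+1)^l.length := enc_lt B l hB
    rw [FE]
    simp only [fcode, Nat.unpair_pair]
    simp [fcode_fst, FE_length]
    rw [List.getElem?_range he]
    simp only [Option.map_some, Option.getD_some, ← List.getD_eq_getElem?_getD]
    rw [ih1 B l rfl hB ha.1, ih2 B l rfl hB ha.2]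
    simp [Delta0.Sat, imp_iff_not_or]
  | ball t φ ih =>
    intro B l hlen hB ha
    subst hlen
    have he : enc B l < (B+1)^l.length := enc_lt B l hB
    rw [FE]
    simp only [fcode, Nat.unpair_pair]
    simp [fcode_fst, FE_length, TE_tcode]
    rw [List.getElem?_range he]
    simp only [Option.map_some, Option.getD_some, ← List.getD_eq_getElem?_getD]
    rw [va_eq_dig l hB]
    have hx : ∀ x ∈ List.range (t.eval (va l) + 1),
        (FE B (fcode φ)).getD (x + (B+1) * enc B l) false =
          decide (φ.Sat (Fin.cons x (va l))) := by
      intro x hx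
      have hxb : x ≤ t.eval (va l) := by have := List.mem_range.mp hx; omega
      obtain ⟨hxB, hadq⟩ := ha x hxb
      have hxl : x + (B+1) * enc B l = enc B (x :: l) := rfl
      rw [hxl, ih B (x :: l) rfl (by
        intro a haa
        rcases List.mem_cons.mp haa with h | h
        · omega
        · exact hB a h) (by rw [va_cons]; exact hadq), va_cons]
    rw [List.map_congr_left hx, bAnd_map_range (t.eval (va l))
      (fun x => φ.Sat (Fin.cons x (va l)))]
    exact decide_eq_decide.mpr (by simp [Delta0.Sat])
  | bex t φ ih =>
    intro B l hlen hB ha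
    subst hlen
    have he : enc B l < (B+1)^l.length := enc_lt B l hB
    rw [FE]
    simp only [fcode, Nat.unpair_pair]
    simp [fcode_fst, FE_length, TE_tcode]
    rw [List.getElem?_range he]
    simp only [Option.map_some, Option.getD_some, ← List.getD_eq_getElem?_getD]
    rw [va_eq_dig l hB]
    have hx : ∀ x ∈ List.range (t.eval (va l) + 1),
        (FE B (fcode φ)).getD (x + (B+1) * enc B l) false =
          decide (φ.Sat (Fin.cons x (va l))) := by
      intro x hx
      have hxb : x ≤ t.eval (va l) := by have := List.mem_range.mp hx; omega
      obtain ⟨hxB, hadq⟩ := ha x hxb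
      have hxl : x + (B+1) * enc B l = enc B (x :: l) := rfl
      rw [hxl, ih B (x :: l) rfl (by
        intro a haa
        rcases List.mem_cons.mp haa with h | h
        · omega
        · exact hB a h) (by rw [va_cons]; exact hadq), va_cons]
    rw [List.map_congr_left hx, bOr_map_range (t.eval (va l))
      (fun x => φ.Sat (Fin.cons x (va l)))]
    exact decide_eq_decide.mpr (by simp [Delta0.Sat])

end SatD0


namespace SatD0
set_option maxHeartbeats 2000000

theorem code2_eq (c : ℕ) : Nat.pair c.unpair.1 (Nat.pair c.unpair.2.unpair.1
    c.unpair.2.unpair.2) = c := by rw [Nat.pair_unpair, Nat.pair_unpair]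

theorem code3_eq (c : ℕ) : Nat.pair c.unpair.1 (Nat.pair c.unpair.2.unpair.1
    (Nat.pair c.unpair.2.unpair.2.unpair.1 c.unpair.2.unpair.2.unpair.2)) = c := by
  rw [Nat.pair_unpair, Nat.pair_unpair, Nat.pair_unpair]

theorem decode_sub (B : ℕ) {c m : ℕ}
    (ih : ∀ m' < c, FE B m' ≠ [] → ∃ (k : ℕ) (θ : Delta0 k), fcode θ = m')
    (hm : m < c) {j : ℕ} (hlen : (FE B m).length = (B+1)^j) :
    ∃ φ : Delta0 m.unpair.1, fcode φ = m := by
  have hne : FE B m ≠ [] := by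
    intro hnil
    rw [hnil] at hlen
    simp at hlen
    have := pow_pos (show 0 < B+1 by omega) j
    omega
  obtain ⟨k', φ, hφ⟩ := ih m hm hne
  have hk : m.unpair.1 = k' := by rw [← hφ, fcode_fst]
  subst hk
  exact ⟨φ, hφ⟩

theorem FE_decode (B : ℕ) : ∀ c, FE B c ≠ [] → ∃ (k : ℕ) (θ : Delta0 k), fcode θ = c := by
  intro c
  induction c using Nat.strong_induction_on with
  | _ c ih =>
    intro h
    rw [FE] at h
    by_cases h0 : c.unpair.2.unpair.1 = 0
    · rw [dif_pos h0] at h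
      split_ifs at h with hc0
      · obtain ⟨v1, hv1⟩ := Option.isSome_iff_exists.mp hc0.1
        obtain ⟨v2, hv2⟩ := Option.isSome_iff_exists.mp hc0.2
        obtain ⟨t1, ht1⟩ := TE_decode B c.unpair.1 0 _ _ hv1
        obtain ⟨t2, ht2⟩ := TE_decode B c.unpair.1 0 _ _ hv2
        refine ⟨c.unpair.1, .eq t1 t2, ?_⟩
        rw [fcode, ht1, ht2, ← h0, code3_eq]
      · exact absurd rfl h
    rw [dif_neg h0] at h
    by_cases h1 : c.unpair.2.unpair.1 = 1
    · rw [dif_pos h1] at h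
      split_ifs at h with hc1
      · obtain ⟨v1, hv1⟩ := Option.isSome_iff_exists.mp hc1.1
        obtain ⟨v2, hv2⟩ := Option.isSome_iff_exists.mp hc1.2
        obtain ⟨t1, ht1⟩ := TE_decode B c.unpair.1 0 _ _ hv1
        obtain ⟨t2, ht2⟩ := TE_decode B c.unpair.1 0 _ _ hv2
        refine ⟨c.unpair.1, .le t1 t2, ?_⟩
        rw [fcode, ht1, ht2, ← h1, code3_eq]
      · exact absurd rfl h
    rw [dif_neg h1] at h
    by_cases h2 : c.unpair.2.unpair.1 = 2
    · rw [dif_pos h2] at h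
      split_ifs at h with hc2
      · obtain ⟨φ0, hφ0⟩ := decode_sub B ih (subf_lt (by omega)) hc2.2
        obtain ⟨φ, hφ⟩ : ∃ φ : Delta0 c.unpair.1, fcode φ = c.unpair.2.unpair.2 := by
          rw [← hc2.1]; exact ⟨φ0, hφ0⟩
        refine ⟨c.unpair.1, .not φ, ?_⟩
        rw [fcode, hφ, ← h2, code2_eq]
      · exact absurd rfl h
    rw [dif_neg h2] at h
    by_cases h3 : c.unpair.2.unpair.1 = 3
    · rw [dif_pos h3] at h
      split_ifs at h with hc3
      · obtain ⟨φ0, hφ0⟩ := decode_sub B ih (subf1_lt (by omega)) hc3.2.2.1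
        obtain ⟨ψ0, hψ0⟩ := decode_sub B ih (subf2_lt (by omega)) hc3.2.2.2
        obtain ⟨φ, hφ⟩ : ∃ φ : Delta0 c.unpair.1,
            fcode φ = c.unpair.2.unpair.2.unpair.1 := by
          rw [← hc3.1]; exact ⟨φ0, hφ0⟩
        obtain ⟨ψ, hψ⟩ : ∃ ψ : Delta0 c.unpair.1,
            fcode ψ = c.unpair.2.unpair.2.unpair.2 := by
          rw [← hc3.2.1]; exact ⟨ψ0, hψ0⟩
        refine ⟨c.unpair.1, .and φ ψ, ?_⟩
        rw [fcode, hφ, hψ, ← h3, code3_eq]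
      · exact absurd rfl h
    rw [dif_neg h3] at h
    by_cases h4 : c.unpair.2.unpair.1 = 4
    · rw [dif_pos h4] at h
      split_ifs at h with hc4
      · obtain ⟨φ0, hφ0⟩ := decode_sub B ih (subf1_lt (by omega)) hc4.2.2.1
        obtain ⟨ψ0, hψ0⟩ := decode_sub B ih (subf2_lt (by omega)) hc4.2.2.2
        obtain ⟨φ, hφ⟩ : ∃ φ : Delta0 c.unpair.1,
            fcode φ = c.unpair.2.unpair.2.unpair.1 := by
          rw [← hc4.1]; exact ⟨φ0, hφ0⟩
        obtain ⟨ψ, hψ⟩ : ∃ ψ : Delta0 c.unpair.1,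
            fcode ψ = c.unpair.2.unpair.2.unpair.2 := by
          rw [← hc4.2.1]; exact ⟨ψ0, hψ0⟩
        refine ⟨c.unpair.1, .or φ ψ, ?_⟩
        rw [fcode, hφ, hψ, ← h4, code3_eq]
      · exact absurd rfl h
    rw [dif_neg h4] at h
    by_cases h5 : c.unpair.2.unpair.1 = 5
    · rw [dif_pos h5] at h
      split_ifs at h with hc5
      · obtain ⟨φ0, hφ0⟩ := decode_sub B ih (subf1_lt (by omega)) hc5.2.2.1
        obtain ⟨ψ0, hψ0⟩ := decode_sub B ih (subf2_lt (by omega)) hc5.2.2.2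
        obtain ⟨φ, hφ⟩ : ∃ φ : Delta0 c.unpair.1,
            fcode φ = c.unpair.2.unpair.2.unpair.1 := by
          rw [← hc5.1]; exact ⟨φ0, hφ0⟩
        obtain ⟨ψ, hψ⟩ : ∃ ψ : Delta0 c.unpair.1,
            fcode ψ = c.unpair.2.unpair.2.unpair.2 := by
          rw [← hc5.2.1]; exact ⟨ψ0, hψ0⟩
        refine ⟨c.unpair.1, .imp φ ψ, ?_⟩
        rw [fcode, hφ, hψ, ← h5, code3_eq]
      · exact absurd rfl h
    rw [dif_neg h5] at h
    by_cases h6 : c.unpair.2.unpair.1 = 6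
    · rw [dif_pos h6] at h
      split_ifs at h with hc6
      · obtain ⟨v1, hv1⟩ := Option.isSome_iff_exists.mp hc6.1
        obtain ⟨t1, ht1⟩ := TE_decode B c.unpair.1 0 _ _ hv1
        obtain ⟨φ0, hφ0⟩ := decode_sub B ih (subf2_lt (by omega)) hc6.2.2
        obtain ⟨φ, hφ⟩ : ∃ φ : Delta0 (c.unpair.1 + 1),
            fcode φ = c.unpair.2.unpair.2.unpair.2 := by
          rw [← hc6.2.1]; exact ⟨φ0, hφ0⟩
        refine ⟨c.unpair.1, .ball t1 φ, ?_⟩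
        rw [fcode, ht1, hφ, ← h6, code3_eq]
      · exact absurd rfl h
    rw [dif_neg h6] at h
    by_cases h7 : c.unpair.2.unpair.1 = 7
    · rw [dif_pos h7] at h
      split_ifs at h with hc7
      · obtain ⟨v1, hv1⟩ := Option.isSome_iff_exists.mp hc7.1
        obtain ⟨t1, ht1⟩ := TE_decode B c.unpair.1 0 _ _ hv1
        obtain ⟨φ0, hφ0⟩ := decode_sub B ih (subf2_lt (by omega)) hc7.2.2
        obtain ⟨φ, hφ⟩ : ∃ φ : Delta0 (c.unpair.1 + 1),
            fcode φ = c.unpair.2.unpair.2.unpair.2 := by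
          rw [← hc7.2.1]; exact ⟨φ0, hφ0⟩
        refine ⟨c.unpair.1, .bex t1 φ, ?_⟩
        rw [fcode, ht1, hφ, ← h7, code3_eq]
      · exact absurd rfl h
    rw [dif_neg h7] at h
    exact absurd rfl h

end SatD0


namespace SatD0
set_option maxHeartbeats 2000000

theorem eval_le {k : ℕ} (t : ATerm k) (v : Fin k → ℕ) (b : ℕ) (h : ∀ i, v i ≤ b) :
    t.eval v ≤ (b+2)^(tcode t + 1) := by
  induction t with
  | zero => simp only [ATerm.eval]; exact Nat.zero_le _
  | one =>
    simp only [ATerm.eval]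
    exact Nat.one_le_pow _ _ (by omega)
  | var i =>
    simp only [ATerm.eval]
    calc v i ≤ b := h i
      _ ≤ (b+2)^1 := by rw [pow_one]; omega
      _ ≤ (b+2)^(tcode (ATerm.var i) + 1) := Nat.pow_le_pow_right (by omega) (by omega)
  | add t s iht ihs =>
    have hc1 : tcode t + tcode s + 2 ≤ tcode (t.add s) := by
      calc tcode t + tcode s + 2 ≤ Nat.pair (tcode t) (tcode s) + 2 := by
            have := add_le_pair (tcode t) (tcode s); omega
        _ ≤ Nat.pair 3 (Nat.pair (tcode t) (tcode s)) := add_two_le_pair (by omega) _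
        _ = tcode (t.add s) := by simp [tcode]
    have h2t : 2 ≤ (b+2)^(tcode t + 1) := by
      have h1 := Nat.pow_le_pow_right (show 1 ≤ b+2 by omega)
        (show 1 ≤ tcode t + 1 by omega)
      rw [pow_one] at h1
      omega
    have h2s : 2 ≤ (b+2)^(tcode s + 1) := by
      have h1 := Nat.pow_le_pow_right (show 1 ≤ b+2 by omega)
        (show 1 ≤ tcode s + 1 by omega)
      rw [pow_one] at h1
      omega
    calc (t.add s).eval v = t.eval v + s.eval v := by simp [ATerm.eval]
      _ ≤ (b+2)^(tcode t + 1) + (b+2)^(tcode s + 1) := Nat.add_le_add iht ihs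
      _ ≤ (b+2)^(tcode t + 1) * (b+2)^(tcode s + 1) := by nlinarith
      _ = (b+2)^(tcode t + tcode s + 2) := by rw [← pow_add]; ring_nf
      _ ≤ (b+2)^(tcode (t.add s) + 1) := Nat.pow_le_pow_right (by omega) (by omega)
  | mul t s iht ihs =>
    have hc1 : tcode t + tcode s + 2 ≤ tcode (t.mul s) := by
      calc tcode t + tcode s + 2 ≤ Nat.pair (tcode t) (tcode s) + 2 := by
            have := add_le_pair (tcode t) (tcode s); omega
        _ ≤ Nat.pair 4 (Nat.pair (tcode t) (tcode s)) := add_two_le_pair (by omega) _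
        _ = tcode (t.mul s) := by simp [tcode]
    calc (t.mul s).eval v = t.eval v * s.eval v := by simp [ATerm.eval]
      _ ≤ (b+2)^(tcode t + 1) * (b+2)^(tcode s + 1) := Nat.mul_le_mul iht ihs
      _ = (b+2)^(tcode t + tcode s + 2) := by rw [← pow_add]; ring_nf
      _ ≤ (b+2)^(tcode (t.mul s) + 1) := Nat.pow_le_pow_right (by omega) (by omega)

/-- one quantifier step of the bound -/
def stepB (c x : ℕ) : ℕ := (x+2)^(c+1)

def iterB (c : ℕ) : ℕ → ℕ → ℕ
  | 0, b => b
  | n+1, b => stepB c (iterB c n b)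

/-- the global bound -/
def GB (c b : ℕ) : ℕ := iterB c (c+1) b

theorem le_stepB (c x : ℕ) : x ≤ stepB c x := by
  calc x ≤ x + 2 := by omega
    _ = (x+2)^1 := (pow_one _).symm
    _ ≤ (x+2)^(c+1) := Nat.pow_le_pow_right (by omega) (by omega)

theorem stepB_mono {c d x y : ℕ} (hc : c ≤ d) (hx : x ≤ y) : stepB c x ≤ stepB d y :=
  calc (x+2)^(c+1) ≤ (y+2)^(c+1) := Nat.pow_le_pow_left (by omega) _
    _ ≤ (y+2)^(d+1) := Nat.pow_le_pow_right (by omega) (by omega)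

theorem iterB_mono {c d n m b b' : ℕ} (hc : c ≤ d) (hn : n ≤ m) (hb : b ≤ b') :
    iterB c n b ≤ iterB d m b' := by
  induction m generalizing n with
  | zero =>
    interval_cases n
    exact hb
  | succ m ihm =>
    rcases Nat.lt_or_ge n (m+1) with hlt | hge
    · calc iterB c n b ≤ iterB d m b' := ihm (by omega)
        _ ≤ stepB d (iterB d m b') := le_stepB _ _
        _ = iterB d (m+1) b' := rfl
    · have : n = m + 1 := by omega
      subst this
      calc iterB c (m+1) b = stepB c (iterB c m b) := rfl
        _ ≤ stepB d (iterB d m b') := stepB_mono hc (ihm (by omega))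
        _ = iterB d (m+1) b' := rfl

theorem le_iterB (c n b : ℕ) : b ≤ iterB c n b := by
  induction n with
  | zero => exact le_refl b
  | succ n ih => exact le_trans ih (le_trans (le_stepB c _) (le_refl _))

theorem iterB_stepB (c n b : ℕ) : iterB c n (stepB c b) = iterB c (n+1) b := by
  induction n with
  | zero => rfl
  | succ n ih => show stepB c (iterB c n (stepB c b)) = _; rw [ih]; rfl

theorem le_GB (c b : ℕ) : b ≤ GB c b := le_iterB _ _ _

theorem stepB_le_GB (c b : ℕ) : stepB c b ≤ GB c b := by
  have : stepB c b = iterB c 1 b := rfl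
  rw [this]
  exact iterB_mono (le_refl c) (by omega) (le_refl b)

theorem Adeq_mono : ∀ {k} (θ : Delta0 k) {B B' : ℕ}, B ≤ B' →
    ∀ v, Adeq B θ v → Adeq B' θ v := by
  intro k θ
  induction θ with
  | eq t s => intro B B' h v _; trivial
  | le t s => intro B B' h v _; trivial
  | not φ ih => intro B B' h v ha; exact ih h v ha
  | and φ ψ ih1 ih2 => intro B B' h v ha; exact ⟨ih1 h v ha.1, ih2 h v ha.2⟩
  | or φ ψ ih1 ih2 => intro B B' h v ha; exact ⟨ih1 h v ha.1, ih2 h v ha.2⟩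
  | imp φ ψ ih1 ih2 => intro B B' h v ha; exact ⟨ih1 h v ha.1, ih2 h v ha.2⟩
  | ball t φ ih =>
    intro B B' h v ha x hx
    exact ⟨le_trans (ha x hx).1 h, ih h _ (ha x hx).2⟩
  | bex t φ ih =>
    intro B B' h v ha x hx
    exact ⟨le_trans (ha x hx).1 h, ih h _ (ha x hx).2⟩

theorem fsub_lt_not {k : ℕ} (φ : Delta0 k) (tag : ℕ) (htag : 1 ≤ tag) :
    fcode φ < Nat.pair k (Nat.pair tag (fcode φ)) :=
  lt_of_lt_of_le (lt_pair htag _) (Nat.right_le_pair _ _)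

theorem fsub_lt_right {k a tag : ℕ} (htag : 1 ≤ tag) (b : ℕ) :
    b < Nat.pair k (Nat.pair tag (Nat.pair a b)) :=
  lt_of_le_of_lt (Nat.right_le_pair a b)
    (lt_of_lt_of_le (lt_pair htag _) (Nat.right_le_pair _ _))

theorem fsub_lt_left {k a tag : ℕ} (htag : 1 ≤ tag) (b : ℕ) :
    a < Nat.pair k (Nat.pair tag (Nat.pair a b)) :=
  lt_of_le_of_lt (Nat.left_le_pair a b)
    (lt_of_lt_of_le (lt_pair htag _) (Nat.right_le_pair _ _))

theorem GB_mono {c d b b' : ℕ} (hc : c ≤ d) (hb : b ≤ b') : GB c b ≤ GB d b' :=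
  iterB_mono hc (by omega) hb

theorem Adeq_GB : ∀ {k} (θ : Delta0 k) (b : ℕ) (v : Fin k → ℕ),
    (∀ i, v i ≤ b) → Adeq (GB (fcode θ) b) θ v := by
  intro k θ
  induction θ with
  | eq t s => intro b v h; trivial
  | le t s => intro b v h; trivial
  | not φ ih =>
    intro b v h
    exact Adeq_mono φ (GB_mono (le_of_lt (fsub_lt_not φ 2 (by omega))) (le_refl b)) v (ih b v h)
  | and φ ψ ih1 ih2 =>
    intro b v h
    exact ⟨Adeq_mono φ (GB_mono (le_of_lt (fsub_lt_left (by omega) _)) (le_refl b)) v (ih1 b v h),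
      Adeq_mono ψ (GB_mono (le_of_lt (fsub_lt_right (by omega) _)) (le_refl b)) v (ih2 b v h)⟩
  | or φ ψ ih1 ih2 =>
    intro b v h
    exact ⟨Adeq_mono φ (GB_mono (le_of_lt (fsub_lt_left (by omega) _)) (le_refl b)) v (ih1 b v h),
      Adeq_mono ψ (GB_mono (le_of_lt (fsub_lt_right (by omega) _)) (le_refl b)) v (ih2 b v h)⟩
  | imp φ ψ ih1 ih2 =>
    intro b v h
    exact ⟨Adeq_mono φ (GB_mono (le_of_lt (fsub_lt_left (by omega) _)) (le_refl b)) v (ih1 b v h),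
      Adeq_mono ψ (GB_mono (le_of_lt (fsub_lt_right (by omega) _)) (le_refl b)) v (ih2 b v h)⟩
  | ball t φ ih =>
    intro b v h x hx
    have htc : tcode t ≤ fcode (Delta0.ball t φ) :=
      le_of_lt (fsub_lt_left (by omega) _)
    have hcφ : fcode φ < fcode (Delta0.ball t φ) := fsub_lt_right (by omega) _
    set c := fcode (Delta0.ball t φ) with hc
    have hxs : x ≤ stepB c b := by
      calc x ≤ t.eval v := hx
        _ ≤ (b+2)^(tcode t + 1) := eval_le t v b h
        _ ≤ (b+2)^(c+1) := Nat.pow_le_pow_right (by omega) (by omega)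
        _ = stepB c b := rfl
    constructor
    · exact le_trans hxs (stepB_le_GB c b)
    · have hvb : ∀ i, (Fin.cons x v : Fin _ → ℕ) i ≤ stepB c b := by
        intro i
        induction i using Fin.cases with
        | zero => simpa using hxs
        | succ j =>
          simp only [Fin.cons_succ]
          exact le_trans (h j) (le_stepB c b)
      have := ih (stepB c b) (Fin.cons x v) hvb
      refine Adeq_mono φ ?_ _ this
      calc GB (fcode φ) (stepB c b) = iterB (fcode φ) (fcode φ + 1) (stepB c b) := rfl
        _ ≤ iterB c (fcode φ + 1) (stepB c b) := iterB_mono (le_of_lt hcφ) (le_refl _) (le_refl _)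
        _ = iterB c (fcode φ + 2) b := by rw [iterB_stepB]
        _ ≤ iterB c (c + 1) b := iterB_mono (le_refl c) (by omega) (le_refl b)
        _ = GB c b := rfl
  | bex t φ ih =>
    intro b v h x hx
    have htc : tcode t ≤ fcode (Delta0.bex t φ) :=
      le_of_lt (fsub_lt_left (by omega) _)
    have hcφ : fcode φ < fcode (Delta0.bex t φ) := fsub_lt_right (by omega) _
    set c := fcode (Delta0.bex t φ) with hc
    have hxs : x ≤ stepB c b := by
      calc x ≤ t.eval v := hx
        _ ≤ (b+2)^(tcode t + 1) := eval_le t v b h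
        _ ≤ (b+2)^(c+1) := Nat.pow_le_pow_right (by omega) (by omega)
        _ = stepB c b := rfl
    constructor
    · exact le_trans hxs (stepB_le_GB c b)
    · have hvb : ∀ i, (Fin.cons x v : Fin _ → ℕ) i ≤ stepB c b := by
        intro i
        induction i using Fin.cases with
        | zero => simpa using hxs
        | succ j =>
          simp only [Fin.cons_succ]
          exact le_trans (h j) (le_stepB c b)
      have := ih (stepB c b) (Fin.cons x v) hvb
      refine Adeq_mono φ ?_ _ this
      calc GB (fcode φ) (stepB c b) = iterB (fcode φ) (fcode φ + 1) (stepB c b) := rfl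
        _ ≤ iterB c (fcode φ + 1) (stepB c b) := iterB_mono (le_of_lt hcφ) (le_refl _) (le_refl _)
        _ = iterB c (fcode φ + 2) b := by rw [iterB_stepB]
        _ ≤ iterB c (c + 1) b := iterB_mono (le_refl c) (by omega) (le_refl b)
        _ = GB c b := rfl

end SatD0


namespace SatD0
set_option maxHeartbeats 2000000

theorem primrec_pow : Primrec₂ ((· ^ ·) : ℕ → ℕ → ℕ) :=
  Primrec₂.unpaired'.mp Nat.Primrec.pow

/-- course-of-values body for TE -/
def teBody (B k e : ℕ) (L : List (Option ℕ)) : Option ℕ :=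
  if L.length.unpair.1 = 0 then (if L.length.unpair.2 = 0 then some 0 else none)
  else if L.length.unpair.1 = 1 then (if L.length.unpair.2 = 0 then some 1 else none)
  else if L.length.unpair.1 = 2 then
    (if L.length.unpair.2 < k then some (dig B e L.length.unpair.2) else none)
  else if L.length.unpair.1 = 3 then
    (L.getD L.length.unpair.2.unpair.1 none).bind fun x =>
      (L.getD L.length.unpair.2.unpair.2 none).map fun y => x + y
  else if L.length.unpair.1 = 4 then
    (L.getD L.length.unpair.2.unpair.1 none).bind fun x =>
      (L.getD L.length.unpair.2.unpair.2 none).map fun y => x * y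
  else none

theorem teBody_spec (B k e n : ℕ) :
    teBody B k e ((List.range n).map (TE B k e)) = TE B k e n := by
  have hlen : ((List.range n).map (TE B k e)).length = n := by
    rw [List.length_map, List.length_range]
  rw [TE]
  unfold teBody
  rw [hlen]
  by_cases h0 : n.unpair.1 = 0
  · rw [if_pos h0, dif_pos h0]
  rw [if_neg h0, dif_neg h0]
  by_cases h1 : n.unpair.1 = 1
  · rw [if_pos h1, dif_pos h1]
  rw [if_neg h1, dif_neg h1]
  by_cases h2 : n.unpair.1 = 2
  · rw [if_pos h2, dif_pos h2]
  rw [if_neg h2, dif_neg h2]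
  have hlt1 : n.unpair.2.unpair.1 < n :=
    lt_of_le_of_lt (Nat.unpair_left_le _) (unpair2_lt (by omega))
  have hlt2 : n.unpair.2.unpair.2 < n :=
    lt_of_le_of_lt (Nat.unpair_right_le _) (unpair2_lt (by omega))
  have g1 : ((List.range n).map (TE B k e)).getD n.unpair.2.unpair.1 none =
      TE B k e n.unpair.2.unpair.1 := getD_map_range _ _ hlt1
  have g2 : ((List.range n).map (TE B k e)).getD n.unpair.2.unpair.2 none =
      TE B k e n.unpair.2.unpair.2 := getD_map_range _ _ hlt2
  by_cases h3 : n.unpair.1 = 3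
  · rw [if_pos h3, dif_pos h3, g1, g2]
  rw [if_neg h3, dif_neg h3]
  by_cases h4 : n.unpair.1 = 4
  · rw [if_pos h4, dif_pos h4, g1, g2]
  rw [if_neg h4, dif_neg h4]

theorem primrec_teBody :
    Primrec₂ fun (a : ℕ × ℕ × ℕ) (L : List (Option ℕ)) => teBody a.1 a.2.1 a.2.2 L := by
  have hB : Primrec fun p : (ℕ × ℕ × ℕ) × List (Option ℕ) => p.1.1 :=
    Primrec.fst.comp Primrec.fst
  have hk : Primrec fun p : (ℕ × ℕ × ℕ) × List (Option ℕ) => p.1.2.1 :=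
    Primrec.fst.comp (Primrec.snd.comp Primrec.fst)
  have he : Primrec fun p : (ℕ × ℕ × ℕ) × List (Option ℕ) => p.1.2.2 :=
    Primrec.snd.comp (Primrec.snd.comp Primrec.fst)
  have hL : Primrec fun p : (ℕ × ℕ × ℕ) × List (Option ℕ) => p.2 := Primrec.snd
  have hlen : Primrec fun p : (ℕ × ℕ × ℕ) × List (Option ℕ) => p.2.length :=
    Primrec.list_length.comp hL
  have hu : Primrec fun p : (ℕ × ℕ × ℕ) × List (Option ℕ) => p.2.length.unpair :=
    Primrec.unpair.comp hlen
  have hu1 : Primrec fun p : (ℕ × ℕ × ℕ) × List (Option ℕ) => p.2.length.unpair.1 :=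
    Primrec.fst.comp hu
  have hu2 : Primrec fun p : (ℕ × ℕ × ℕ) × List (Option ℕ) => p.2.length.unpair.2 :=
    Primrec.snd.comp hu
  have hu21 : Primrec fun p : (ℕ × ℕ × ℕ) × List (Option ℕ) =>
      p.2.length.unpair.2.unpair.1 := Primrec.fst.comp (Primrec.unpair.comp hu2)
  have hu22 : Primrec fun p : (ℕ × ℕ × ℕ) × List (Option ℕ) =>
      p.2.length.unpair.2.unpair.2 := Primrec.snd.comp (Primrec.unpair.comp hu2)
  have hdig : Primrec fun p : (ℕ × ℕ × ℕ) × List (Option ℕ) =>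
      dig p.1.1 p.1.2.2 p.2.length.unpair.2 := by
    have hpow : Primrec fun p : (ℕ × ℕ × ℕ) × List (Option ℕ) =>
        (p.1.1 + 1) ^ p.2.length.unpair.2 :=
      primrec_pow.comp (Primrec.succ.comp hB) hu2
    exact Primrec.nat_mod.comp (Primrec.nat_div.comp he hpow) (Primrec.succ.comp hB)
  have hget1 : Primrec fun p : (ℕ × ℕ × ℕ) × List (Option ℕ) =>
      p.2.getD p.2.length.unpair.2.unpair.1 none :=
    (Primrec.list_getD none).comp hL hu21
  have hget2 : Primrec fun p : (ℕ × ℕ × ℕ) × List (Option ℕ) =>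
      p.2.getD p.2.length.unpair.2.unpair.2 none :=
    (Primrec.list_getD none).comp hL hu22
  have hbind : ∀ (op : ℕ → ℕ → ℕ), Primrec₂ op →
      Primrec fun p : (ℕ × ℕ × ℕ) × List (Option ℕ) =>
        (p.2.getD p.2.length.unpair.2.unpair.1 none).bind fun x =>
          (p.2.getD p.2.length.unpair.2.unpair.2 none).map fun y => op x y := by
    intro op hop
    exact Primrec.option_bind hget1
      (Primrec.to₂ (Primrec.option_map (hget2.comp Primrec.fst)
        (Primrec.to₂ (hop.comp (Primrec.snd.comp Primrec.fst) Primrec.snd))))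
  have main : Primrec fun p : (ℕ × ℕ × ℕ) × List (Option ℕ) =>
      teBody p.1.1 p.1.2.1 p.1.2.2 p.2 := by
    unfold teBody
    apply Primrec.ite (Primrec.eq.comp hu1 (Primrec.const 0))
    · exact Primrec.ite (Primrec.eq.comp hu2 (Primrec.const 0))
        (Primrec.const (some 0)) (Primrec.const none)
    apply Primrec.ite (Primrec.eq.comp hu1 (Primrec.const 1))
    · exact Primrec.ite (Primrec.eq.comp hu2 (Primrec.const 0))
        (Primrec.const (some 1)) (Primrec.const none)
    apply Primrec.ite (Primrec.eq.comp hu1 (Primrec.const 2))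
    · exact Primrec.ite (Primrec.nat_lt.comp hu2 hk)
        (Primrec.option_some.comp hdig) (Primrec.const none)
    apply Primrec.ite (Primrec.eq.comp hu1 (Primrec.const 3))
    · exact hbind _ Primrec.nat_add
    apply Primrec.ite (Primrec.eq.comp hu1 (Primrec.const 4))
    · exact hbind _ Primrec.nat_mul
    exact Primrec.const none
  exact main.to₂

theorem primrec_TE : Primrec₂ fun (a : ℕ × ℕ × ℕ) (c : ℕ) => TE a.1 a.2.1 a.2.2 c := by
  apply Primrec.nat_strong_rec _
    ((Primrec.option_some.comp primrec_teBody).to₂ :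
      Primrec₂ fun (a : ℕ × ℕ × ℕ) (L : List (Option ℕ)) => some (teBody a.1 a.2.1 a.2.2 L))
  intro a n
  simp only []
  congr 1
  exact teBody_spec a.1 a.2.1 a.2.2 n

end SatD0


namespace SatD0
set_option maxHeartbeats 2000000

/-- course-of-values body for FE -/
def feBody (B : ℕ) (L : List (List Bool)) : List Bool :=
  if L.length.unpair.2.unpair.1 = 0 then
    if (TE B L.length.unpair.1 0 L.length.unpair.2.unpair.2.unpair.1).isSome ∧
        (TE B L.length.unpair.1 0 L.length.unpair.2.unpair.2.unpair.2).isSome then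
      (List.range ((B+1)^L.length.unpair.1)).map fun e =>
        decide ((TE B L.length.unpair.1 e L.length.unpair.2.unpair.2.unpair.1).getD 0 =
          (TE B L.length.unpair.1 e L.length.unpair.2.unpair.2.unpair.2).getD 0)
    else []
  else if L.length.unpair.2.unpair.1 = 1 then
    if (TE B L.length.unpair.1 0 L.length.unpair.2.unpair.2.unpair.1).isSome ∧
        (TE B L.length.unpair.1 0 L.length.unpair.2.unpair.2.unpair.2).isSome then
      (List.range ((B+1)^L.length.unpair.1)).map fun e =>
        decide ((TE B L.length.unpair.1 e L.length.unpair.2.unpair.2.unpair.1).getD 0 ≤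
          (TE B L.length.unpair.1 e L.length.unpair.2.unpair.2.unpair.2).getD 0)
    else []
  else if L.length.unpair.2.unpair.1 = 2 then
    if L.length.unpair.2.unpair.2.unpair.1 = L.length.unpair.1 ∧
        (L.getD L.length.unpair.2.unpair.2 []).length = (B+1)^L.length.unpair.1 then
      (List.range ((B+1)^L.length.unpair.1)).map fun e =>
        !((L.getD L.length.unpair.2.unpair.2 []).getD e false)
    else []
  else if L.length.unpair.2.unpair.1 = 3 then
    if L.length.unpair.2.unpair.2.unpair.1.unpair.1 = L.length.unpair.1 ∧
        L.length.unpair.2.unpair.2.unpair.2.unpair.1 = L.length.unpair.1 ∧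
        (L.getD L.length.unpair.2.unpair.2.unpair.1 []).length = (B+1)^L.length.unpair.1 ∧
        (L.getD L.length.unpair.2.unpair.2.unpair.2 []).length = (B+1)^L.length.unpair.1 then
      (List.range ((B+1)^L.length.unpair.1)).map fun e =>
        ((L.getD L.length.unpair.2.unpair.2.unpair.1 []).getD e false &&
          (L.getD L.length.unpair.2.unpair.2.unpair.2 []).getD e false)
    else []
  else if L.length.unpair.2.unpair.1 = 4 then
    if L.length.unpair.2.unpair.2.unpair.1.unpair.1 = L.length.unpair.1 ∧
        L.length.unpair.2.unpair.2.unpair.2.unpair.1 = L.length.unpair.1 ∧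
        (L.getD L.length.unpair.2.unpair.2.unpair.1 []).length = (B+1)^L.length.unpair.1 ∧
        (L.getD L.length.unpair.2.unpair.2.unpair.2 []).length = (B+1)^L.length.unpair.1 then
      (List.range ((B+1)^L.length.unpair.1)).map fun e =>
        ((L.getD L.length.unpair.2.unpair.2.unpair.1 []).getD e false ||
          (L.getD L.length.unpair.2.unpair.2.unpair.2 []).getD e false)
    else []
  else if L.length.unpair.2.unpair.1 = 5 then
    if L.length.unpair.2.unpair.2.unpair.1.unpair.1 = L.length.unpair.1 ∧
        L.length.unpair.2.unpair.2.unpair.2.unpair.1 = L.length.unpair.1 ∧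
        (L.getD L.length.unpair.2.unpair.2.unpair.1 []).length = (B+1)^L.length.unpair.1 ∧
        (L.getD L.length.unpair.2.unpair.2.unpair.2 []).length = (B+1)^L.length.unpair.1 then
      (List.range ((B+1)^L.length.unpair.1)).map fun e =>
        (!((L.getD L.length.unpair.2.unpair.2.unpair.1 []).getD e false) ||
          (L.getD L.length.unpair.2.unpair.2.unpair.2 []).getD e false)
    else []
  else if L.length.unpair.2.unpair.1 = 6 then
    if (TE B L.length.unpair.1 0 L.length.unpair.2.unpair.2.unpair.1).isSome ∧
        L.length.unpair.2.unpair.2.unpair.2.unpair.1 = L.length.unpair.1 + 1 ∧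
        (L.getD L.length.unpair.2.unpair.2.unpair.2 []).length = (B+1)^(L.length.unpair.1+1) then
      (List.range ((B+1)^L.length.unpair.1)).map fun e =>
        bAnd ((List.range ((TE B L.length.unpair.1 e L.length.unpair.2.unpair.2.unpair.1).getD 0
            + 1)).map
          fun x => (L.getD L.length.unpair.2.unpair.2.unpair.2 []).getD (x + (B+1) * e) false)
    else []
  else if L.length.unpair.2.unpair.1 = 7 then
    if (TE B L.length.unpair.1 0 L.length.unpair.2.unpair.2.unpair.1).isSome ∧
        L.length.unpair.2.unpair.2.unpair.2.unpair.1 = L.length.unpair.1 + 1 ∧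
        (L.getD L.length.unpair.2.unpair.2.unpair.2 []).length = (B+1)^(L.length.unpair.1+1) then
      (List.range ((B+1)^L.length.unpair.1)).map fun e =>
        bOr ((List.range ((TE B L.length.unpair.1 e L.length.unpair.2.unpair.2.unpair.1).getD 0
            + 1)).map
          fun x => (L.getD L.length.unpair.2.unpair.2.unpair.2 []).getD (x + (B+1) * e) false)
    else []
  else []

theorem feBody_spec (B n : ℕ) :
    feBody B ((List.range n).map (FE B)) = FE B n := by
  have hlen : ((List.range n).map (FE B)).length = n := by
    rw [List.length_map, List.length_range]
  rw [FE]
  unfold feBody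
  rw [hlen]
  by_cases h0 : n.unpair.2.unpair.1 = 0
  · rw [if_pos h0, dif_pos h0]
  rw [if_neg h0, dif_neg h0]
  by_cases h1 : n.unpair.2.unpair.1 = 1
  · rw [if_pos h1, dif_pos h1]
  rw [if_neg h1, dif_neg h1]
  have g0 : ((List.range n).map (FE B)).getD n.unpair.2.unpair.2 [] =
      FE B n.unpair.2.unpair.2 := getD_map_range _ _ (subf_lt (by omega))
  have g1 : ((List.range n).map (FE B)).getD n.unpair.2.unpair.2.unpair.1 [] =
      FE B n.unpair.2.unpair.2.unpair.1 := getD_map_range _ _ (subf1_lt (by omega))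
  have g2 : ((List.range n).map (FE B)).getD n.unpair.2.unpair.2.unpair.2 [] =
      FE B n.unpair.2.unpair.2.unpair.2 := getD_map_range _ _ (subf2_lt (by omega))
  by_cases h2 : n.unpair.2.unpair.1 = 2
  · rw [if_pos h2, dif_pos h2, g0]
  rw [if_neg h2, dif_neg h2]
  by_cases h3 : n.unpair.2.unpair.1 = 3
  · rw [if_pos h3, dif_pos h3, g1, g2]
  rw [if_neg h3, dif_neg h3]
  by_cases h4 : n.unpair.2.unpair.1 = 4
  · rw [if_pos h4, dif_pos h4, g1, g2]
  rw [if_neg h4, dif_neg h4]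
  by_cases h5 : n.unpair.2.unpair.1 = 5
  · rw [if_pos h5, dif_pos h5, g1, g2]
  rw [if_neg h5, dif_neg h5]
  by_cases h6 : n.unpair.2.unpair.1 = 6
  · rw [if_pos h6, dif_pos h6, g2]
  rw [if_neg h6, dif_neg h6]
  by_cases h7 : n.unpair.2.unpair.1 = 7
  · rw [if_pos h7, dif_pos h7, g2]
  rw [if_neg h7, dif_neg h7]

end SatD0


namespace SatD0
set_option maxHeartbeats 4000000

theorem primrec_bAnd : Primrec bAnd := by
  have := Primrec.list_foldr (Primrec.id : Primrec (fun l : List Bool => l))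
    (Primrec.const true)
    ((Primrec.and.comp (Primrec.fst.comp Primrec.snd) (Primrec.snd.comp Primrec.snd)).to₂ :
      Primrec₂ fun (_ : List Bool) (p : Bool × Bool) => p.1 && p.2)
  exact this.of_eq fun l => rfl

theorem primrec_bOr : Primrec bOr := by
  have := Primrec.list_foldr (Primrec.id : Primrec (fun l : List Bool => l))
    (Primrec.const false)
    ((Primrec.or.comp (Primrec.fst.comp Primrec.snd) (Primrec.snd.comp Primrec.snd)).to₂ :
      Primrec₂ fun (_ : List Bool) (p : Bool × Bool) => p.1 || p.2)
  exact this.of_eq fun l => rfl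

theorem primrec_feBody :
    Primrec₂ fun (B : ℕ) (L : List (List Bool)) => feBody B L := by
  -- abbreviation for the pair type
  have hB : Primrec fun p : ℕ × List (List Bool) => p.1 := Primrec.fst
  have hL : Primrec fun p : ℕ × List (List Bool) => p.2 := Primrec.snd
  have hc : Primrec fun p : ℕ × List (List Bool) => p.2.length := Primrec.list_length.comp hL
  have hk : Primrec fun p : ℕ × List (List Bool) => p.2.length.unpair.1 :=
    Primrec.fst.comp (Primrec.unpair.comp hc)
  have hq : Primrec fun p : ℕ × List (List Bool) => p.2.length.unpair.2 :=
    Primrec.snd.comp (Primrec.unpair.comp hc)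
  have ht : Primrec fun p : ℕ × List (List Bool) => p.2.length.unpair.2.unpair.1 :=
    Primrec.fst.comp (Primrec.unpair.comp hq)
  have hp : Primrec fun p : ℕ × List (List Bool) => p.2.length.unpair.2.unpair.2 :=
    Primrec.snd.comp (Primrec.unpair.comp hq)
  have hp1 : Primrec fun p : ℕ × List (List Bool) => p.2.length.unpair.2.unpair.2.unpair.1 :=
    Primrec.fst.comp (Primrec.unpair.comp hp)
  have hp2 : Primrec fun p : ℕ × List (List Bool) => p.2.length.unpair.2.unpair.2.unpair.2 :=
    Primrec.snd.comp (Primrec.unpair.comp hp)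
  have hp11 : Primrec fun p : ℕ × List (List Bool) =>
      p.2.length.unpair.2.unpair.2.unpair.1.unpair.1 :=
    Primrec.fst.comp (Primrec.unpair.comp hp1)
  have hp21 : Primrec fun p : ℕ × List (List Bool) =>
      p.2.length.unpair.2.unpair.2.unpair.2.unpair.1 :=
    Primrec.fst.comp (Primrec.unpair.comp hp2)
  have hN : Primrec fun p : ℕ × List (List Bool) => (p.1+1)^p.2.length.unpair.1 :=
    primrec_pow.comp (Primrec.succ.comp hB) hk
  have hN1 : Primrec fun p : ℕ × List (List Bool) => (p.1+1)^(p.2.length.unpair.1+1) :=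
    primrec_pow.comp (Primrec.succ.comp hB) (Primrec.succ.comp hk)
  -- TE at e = 0 with a given code accessor
  have hTE0 : ∀ {f : ℕ × List (List Bool) → ℕ}, Primrec f →
      Primrec fun p : ℕ × List (List Bool) => TE p.1 p.2.length.unpair.1 0 (f p) := by
    intro f hf
    exact primrec_TE.comp (hB.pair (hk.pair (Primrec.const 0))) hf
  -- isSome = true conditions
  have hSome : ∀ {f : ℕ × List (List Bool) → ℕ}, Primrec f →
      PrimrecPred fun p : ℕ × List (List Bool) =>
        (TE p.1 p.2.length.unpair.1 0 (f p)).isSome = true := by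
    intro f hf
    exact Primrec.eq.comp (Primrec.option_isSome.comp (hTE0 hf)) (Primrec.const true)
  -- tables
  have hT0 : Primrec fun p : ℕ × List (List Bool) =>
      p.2.getD p.2.length.unpair.2.unpair.2 [] := (Primrec.list_getD []).comp hL hp
  have hT1 : Primrec fun p : ℕ × List (List Bool) =>
      p.2.getD p.2.length.unpair.2.unpair.2.unpair.1 [] := (Primrec.list_getD []).comp hL hp1
  have hT2 : Primrec fun p : ℕ × List (List Bool) =>
      p.2.getD p.2.length.unpair.2.unpair.2.unpair.2 [] := (Primrec.list_getD []).comp hL hp2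
  -- TE applied to the range variable e, with a given code accessor
  have hTEe : ∀ {f : ℕ × List (List Bool) → ℕ}, Primrec f →
      Primrec fun q : (ℕ × List (List Bool)) × ℕ =>
        (TE q.1.1 q.1.2.length.unpair.1 q.2 (f q.1)).getD 0 := by
    intro f hf
    exact Primrec.option_getD.comp
      (primrec_TE.comp ((hB.comp Primrec.fst).pair ((hk.comp Primrec.fst).pair Primrec.snd))
        (hf.comp Primrec.fst)) (Primrec.const 0)
  -- atomic branches
  have br_eq : Primrec fun p : ℕ × List (List Bool) =>
      (List.range ((p.1+1)^p.2.length.unpair.1)).map fun e =>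
        decide ((TE p.1 p.2.length.unpair.1 e
          p.2.length.unpair.2.unpair.2.unpair.1).getD 0 =
          (TE p.1 p.2.length.unpair.1 e p.2.length.unpair.2.unpair.2.unpair.2).getD 0) :=
    Primrec.list_map (Primrec.list_range.comp hN)
      ((Primrec.eq.comp (hTEe hp1) (hTEe hp2)).decide.to₂)
  have br_le : Primrec fun p : ℕ × List (List Bool) =>
      (List.range ((p.1+1)^p.2.length.unpair.1)).map fun e =>
        decide ((TE p.1 p.2.length.unpair.1 e
          p.2.length.unpair.2.unpair.2.unpair.1).getD 0 ≤
          (TE p.1 p.2.length.unpair.1 e p.2.length.unpair.2.unpair.2.unpair.2).getD 0) :=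
    Primrec.list_map (Primrec.list_range.comp hN)
      ((Primrec.nat_le.comp (hTEe hp1) (hTEe hp2)).decide.to₂)
  -- boolean-combination branches
  have hgete : ∀ {f : ℕ × List (List Bool) → List Bool}, Primrec f →
      Primrec fun q : (ℕ × List (List Bool)) × ℕ => (f q.1).getD q.2 false := by
    intro f hf
    exact (Primrec.list_getD false).comp (hf.comp Primrec.fst) Primrec.snd
  have br_not : Primrec fun p : ℕ × List (List Bool) =>
      (List.range ((p.1+1)^p.2.length.unpair.1)).map fun e =>
        !((p.2.getD p.2.length.unpair.2.unpair.2 []).getD e false) :=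
    Primrec.list_map (Primrec.list_range.comp hN)
      ((Primrec.not.comp (hgete hT0)).to₂)
  have br_and : Primrec fun p : ℕ × List (List Bool) =>
      (List.range ((p.1+1)^p.2.length.unpair.1)).map fun e =>
        ((p.2.getD p.2.length.unpair.2.unpair.2.unpair.1 []).getD e false &&
          (p.2.getD p.2.length.unpair.2.unpair.2.unpair.2 []).getD e false) :=
    Primrec.list_map (Primrec.list_range.comp hN)
      ((Primrec.and.comp (hgete hT1) (hgete hT2)).to₂)
  have br_or : Primrec fun p : ℕ × List (List Bool) =>
      (List.range ((p.1+1)^p.2.length.unpair.1)).map fun e =>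
        ((p.2.getD p.2.length.unpair.2.unpair.2.unpair.1 []).getD e false ||
          (p.2.getD p.2.length.unpair.2.unpair.2.unpair.2 []).getD e false) :=
    Primrec.list_map (Primrec.list_range.comp hN)
      ((Primrec.or.comp (hgete hT1) (hgete hT2)).to₂)
  have br_imp : Primrec fun p : ℕ × List (List Bool) =>
      (List.range ((p.1+1)^p.2.length.unpair.1)).map fun e =>
        (!((p.2.getD p.2.length.unpair.2.unpair.2.unpair.1 []).getD e false) ||
          (p.2.getD p.2.length.unpair.2.unpair.2.unpair.2 []).getD e false) :=
    Primrec.list_map (Primrec.list_range.comp hN)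
      ((Primrec.or.comp (Primrec.not.comp (hgete hT1)) (hgete hT2)).to₂)
  -- bounded-quantifier branches
  have hbound : Primrec fun q : (ℕ × List (List Bool)) × ℕ =>
      (TE q.1.1 q.1.2.length.unpair.1 q.2
        (q.1.2.length.unpair.2.unpair.2.unpair.1)).getD 0 + 1 :=
    Primrec.succ.comp (hTEe hp1)
  have hinner2 : Primrec₂ fun (q : (ℕ × List (List Bool)) × ℕ) (x : ℕ) =>
      (q.1.2.getD q.1.2.length.unpair.2.unpair.2.unpair.2 []).getD
        (x + (q.1.1+1) * q.2) false :=
    ((Primrec.list_getD false).comp (hT2.comp (Primrec.fst.comp Primrec.fst))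
      (Primrec.nat_add.comp Primrec.snd
        (Primrec.nat_mul.comp
          (Primrec.succ.comp (hB.comp (Primrec.fst.comp Primrec.fst)))
          (Primrec.snd.comp Primrec.fst)))).to₂
  have br_ball : Primrec fun p : ℕ × List (List Bool) =>
      (List.range ((p.1+1)^p.2.length.unpair.1)).map fun e =>
        bAnd ((List.range ((TE p.1 p.2.length.unpair.1 e
            p.2.length.unpair.2.unpair.2.unpair.1).getD 0 + 1)).map
          fun x => (p.2.getD p.2.length.unpair.2.unpair.2.unpair.2 []).getD
            (x + (p.1+1) * e) false) :=
    Primrec.list_map (Primrec.list_range.comp hN)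
      ((primrec_bAnd.comp
        (Primrec.list_map (Primrec.list_range.comp hbound) hinner2)).to₂)
  have br_bex : Primrec fun p : ℕ × List (List Bool) =>
      (List.range ((p.1+1)^p.2.length.unpair.1)).map fun e =>
        bOr ((List.range ((TE p.1 p.2.length.unpair.1 e
            p.2.length.unpair.2.unpair.2.unpair.1).getD 0 + 1)).map
          fun x => (p.2.getD p.2.length.unpair.2.unpair.2.unpair.2 []).getD
            (x + (p.1+1) * e) false) :=
    Primrec.list_map (Primrec.list_range.comp hN)
      ((primrec_bOr.comp
        (Primrec.list_map (Primrec.list_range.comp hbound) hinner2)).to₂)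
  -- conditions
  have ctag : ∀ m : ℕ, PrimrecPred fun p : ℕ × List (List Bool) =>
      p.2.length.unpair.2.unpair.1 = m := fun m => Primrec.eq.comp ht (Primrec.const m)
  have catom : PrimrecPred fun p : ℕ × List (List Bool) =>
      (TE p.1 p.2.length.unpair.1 0 p.2.length.unpair.2.unpair.2.unpair.1).isSome = true ∧
      (TE p.1 p.2.length.unpair.1 0 p.2.length.unpair.2.unpair.2.unpair.2).isSome = true :=
    PrimrecPred.and (hSome hp1) (hSome hp2)
  have cnot : PrimrecPred fun p : ℕ × List (List Bool) =>
      p.2.length.unpair.2.unpair.2.unpair.1 = p.2.length.unpair.1 ∧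
      (p.2.getD p.2.length.unpair.2.unpair.2 []).length = (p.1+1)^p.2.length.unpair.1 :=
    PrimrecPred.and (Primrec.eq.comp hp1 hk)
      (Primrec.eq.comp (Primrec.list_length.comp hT0) hN)
  have cbin : PrimrecPred fun p : ℕ × List (List Bool) =>
      p.2.length.unpair.2.unpair.2.unpair.1.unpair.1 = p.2.length.unpair.1 ∧
      p.2.length.unpair.2.unpair.2.unpair.2.unpair.1 = p.2.length.unpair.1 ∧
      (p.2.getD p.2.length.unpair.2.unpair.2.unpair.1 []).length = (p.1+1)^p.2.length.unpair.1 ∧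
      (p.2.getD p.2.length.unpair.2.unpair.2.unpair.2 []).length = (p.1+1)^p.2.length.unpair.1 :=
    PrimrecPred.and (Primrec.eq.comp hp11 hk)
      (PrimrecPred.and (Primrec.eq.comp hp21 hk)
        (PrimrecPred.and (Primrec.eq.comp (Primrec.list_length.comp hT1) hN)
          (Primrec.eq.comp (Primrec.list_length.comp hT2) hN)))
  have cquant : PrimrecPred fun p : ℕ × List (List Bool) =>
      (TE p.1 p.2.length.unpair.1 0 p.2.length.unpair.2.unpair.2.unpair.1).isSome = true ∧
      p.2.length.unpair.2.unpair.2.unpair.2.unpair.1 = p.2.length.unpair.1 + 1 ∧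
      (p.2.getD p.2.length.unpair.2.unpair.2.unpair.2 []).length =
        (p.1+1)^(p.2.length.unpair.1+1) :=
    PrimrecPred.and (hSome hp1)
      (PrimrecPred.and (Primrec.eq.comp hp21 (Primrec.succ.comp hk))
        (Primrec.eq.comp (Primrec.list_length.comp hT2) hN1))
  -- assemble
  have main : Primrec fun p : ℕ × List (List Bool) => feBody p.1 p.2 := by
    unfold feBody
    apply Primrec.ite (ctag 0)
    · exact Primrec.ite catom br_eq (Primrec.const [])
    apply Primrec.ite (ctag 1)
    · exact Primrec.ite catom br_le (Primrec.const [])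
    apply Primrec.ite (ctag 2)
    · exact Primrec.ite cnot br_not (Primrec.const [])
    apply Primrec.ite (ctag 3)
    · exact Primrec.ite cbin br_and (Primrec.const [])
    apply Primrec.ite (ctag 4)
    · exact Primrec.ite cbin br_or (Primrec.const [])
    apply Primrec.ite (ctag 5)
    · exact Primrec.ite cbin br_imp (Primrec.const [])
    apply Primrec.ite (ctag 6)
    · exact Primrec.ite cquant br_ball (Primrec.const [])
    apply Primrec.ite (ctag 7)
    · exact Primrec.ite cquant br_bex (Primrec.const [])
    exact Primrec.const []
  exact main.to₂

theorem primrec_FE : Primrec₂ FE := by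
  apply Primrec.nat_strong_rec _
    ((Primrec.option_some.comp primrec_feBody).to₂ :
      Primrec₂ fun (B : ℕ) (L : List (List Bool)) => some (feBody B L))
  intro B n
  simp only []
  congr 1
  exact feBody_spec B n

end SatD0


namespace SatD0
set_option maxHeartbeats 2000000

def encC (B y : ℕ) : ℕ → ℕ
  | 0 => 0
  | k+1 => y + (B+1) * encC B y k

theorem encC_eq (B y : ℕ) : ∀ k, encC B y k = enc B (List.replicate k y)
  | 0 => rfl
  | k+1 => by rw [encC, List.replicate_succ, enc, encC_eq B y k]

theorem enc_foldr (B : ℕ) : ∀ l : List ℕ, enc B l = l.foldr (fun a r => a + (B+1) * r) 0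
  | [] => rfl
  | x :: l => by rw [enc, List.foldr_cons, enc_foldr B l]

theorem primrec_enc : Primrec₂ enc := by
  have h := Primrec.list_foldr (Primrec.snd : Primrec fun p : ℕ × List ℕ => p.2)
    (Primrec.const 0)
    ((Primrec.nat_add.comp (Primrec.fst.comp Primrec.snd)
      (Primrec.nat_mul.comp (Primrec.succ.comp (Primrec.fst.comp Primrec.fst))
        (Primrec.snd.comp Primrec.snd))).to₂ :
      Primrec₂ fun (p : ℕ × List ℕ) (q : ℕ × ℕ) => q.1 + (p.1+1) * q.2)
  exact (h.of_eq fun p => (enc_foldr p.1 p.2).symm).to₂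

theorem primrec_encC : Primrec₂ fun (a : ℕ × ℕ) (k : ℕ) => encC a.1 a.2 k := by
  have h := Primrec.nat_rec (Primrec.const 0 : Primrec fun _ : ℕ × ℕ => (0 : ℕ))
    ((Primrec.nat_add.comp (Primrec.snd.comp Primrec.fst)
      (Primrec.nat_mul.comp (Primrec.succ.comp (Primrec.fst.comp Primrec.fst))
        (Primrec.snd.comp Primrec.snd))).to₂ :
      Primrec₂ fun (a : ℕ × ℕ) (q : ℕ × ℕ) => a.2 + (a.1+1) * q.2)
  refine h.of_eq ?_
  intro a k
  induction k with
  | zero => rfl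
  | succ k ih => simp only [encC, ← ih]

theorem iterB_eq_iterate (c : ℕ) : ∀ n b, iterB c n b = (stepB c)^[n] b := by
  intro n
  induction n with
  | zero => intro b; rfl
  | succ n ih =>
    intro b
    rw [show iterB c (n+1) b = stepB c (iterB c n b) from rfl, ih,
      Function.iterate_succ_apply']

theorem primrec_GB : Primrec₂ GB := by
  have h := Primrec.nat_iterate
    (Primrec.succ.comp (Primrec.fst : Primrec fun p : ℕ × ℕ => p.1))
    (Primrec.snd : Primrec fun p : ℕ × ℕ => p.2)
    ((primrec_pow.comp (Primrec.succ.comp (Primrec.succ.comp Primrec.snd))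
      (Primrec.succ.comp (Primrec.fst.comp Primrec.fst))).to₂ :
      Primrec₂ fun (p : ℕ × ℕ) (x : ℕ) => (x+2)^(p.1+1))
  exact (h.of_eq fun p => by
    rw [show (fun x => (x+2)^(p.1+1)) = stepB p.1 from rfl, ← iterB_eq_iterate]).to₂

/-- the characteristic function of Δ₀ satisfaction -/
def chi (x y : ℕ) : Bool :=
  (FE (GB x y) x).getD (encC (GB x y) y x.unpair.1) false

theorem primrec_chi : Primrec₂ chi := by
  have hx : Primrec fun p : ℕ × ℕ => p.1 := Primrec.fst
  have hy : Primrec fun p : ℕ × ℕ => p.2 := Primrec.snd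
  have hGB : Primrec fun p : ℕ × ℕ => GB p.1 p.2 := primrec_GB.comp hx hy
  have hFE : Primrec fun p : ℕ × ℕ => FE (GB p.1 p.2) p.1 := primrec_FE.comp hGB hx
  have hk : Primrec fun p : ℕ × ℕ => p.1.unpair.1 :=
    Primrec.fst.comp (Primrec.unpair.comp hx)
  have hidx : Primrec fun p : ℕ × ℕ => encC (GB p.1 p.2) p.2 p.1.unpair.1 :=
    primrec_encC.comp (hGB.pair hy) hk
  exact ((Primrec.list_getD false).comp hFE hidx).to₂

theorem getD_replicate (y : ℕ) : ∀ (k i : ℕ), i < k → (List.replicate k y).getD i 0 = y := by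
  intro k
  induction k with
  | zero => intro i h; omega
  | succ k ih =>
    intro i h
    rw [List.replicate_succ]
    cases i with
    | zero => rfl
    | succ i => rw [List.getD_cons_succ]; exact ih i (by omega)

theorem va_replicate (k y : ℕ) : (va (List.replicate k y) : Fin k → ℕ) = fun _ => y := by
  funext i
  exact getD_replicate y k i i.isLt

theorem chi_table {k : ℕ} (θ : Delta0 k) (y : ℕ) :
    chi (fcode θ) y = decide (θ.Sat fun _ => y) := by
  set x := fcode θ with hx
  set B := GB x y with hB
  have hlen : (List.replicate k y).length = k := List.length_replicate
  have hent : ∀ a ∈ List.replicate k y, a ≤ B := by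
    intro a ha
    rw [List.eq_of_mem_replicate ha]
    exact le_GB x y
  have hadq : Adeq B θ (va (List.replicate k y)) := by
    rw [hB, hx]
    exact Adeq_GB θ y _ (by intro i; rw [va_replicate])
  have := FE_correct θ B (List.replicate k y) hlen hent hadq
  rw [va_replicate] at this
  rw [← hx] at this
  have hk2 : x.unpair.1 = k := by rw [hx]; exact fcode_fst θ
  show (FE (GB x y) x).getD (encC (GB x y) y x.unpair.1) false = _
  rw [hk2, encC_eq]
  exact this

theorem chi_iff (x y : ℕ) : chi x y = true ↔
    ∃ (k : ℕ) (θ : Delta0 k), fcode θ = x ∧ θ.Sat fun _ => y := by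
  constructor
  · intro h
    have hne : FE (GB x y) x ≠ [] := by
      intro hnil
      have h' : (FE (GB x y) x).getD (encC (GB x y) y x.unpair.1) false = true := h
      rw [hnil] at h'
      simp at h'
    obtain ⟨k, θ, hθ⟩ := FE_decode (GB x y) x hne
    refine ⟨k, θ, hθ, ?_⟩
    rw [← hθ, chi_table] at h
    exact of_decide_eq_true h
  · rintro ⟨k, θ, hθ, hsat⟩
    rw [← hθ, chi_table]
    exact decide_eq_true hsat

end SatD0


/-- The Δ₀-satisfaction relation `Sat_{Δ₀}(x, y)` — holding when `x` is the Gödel code of a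
Δ₀ formula `θ` and `ℕ ⊨ θ(y⃗)`, with `y` substituted for all free variables of `θ` — is a
primitive recursive relation (for a suitable injective Gödel coding of Δ₀ formulas). -/
theorem sat_delta0_primrec :
    ∃ code : (Σ k, Delta0 k) → ℕ, Function.Injective code ∧
      ∃ χ : ℕ → ℕ → Bool, Primrec₂ χ ∧
        ∀ x y : ℕ, χ x y = true ↔
          ∃ (k : ℕ) (θ : Delta0 k), code ⟨k, θ⟩ = x ∧ θ.Sat fun _ => y := by
  refine ⟨fun s => SatD0.fcode s.2, ?_, SatD0.chi, SatD0.primrec_chi, ?_⟩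
  · rintro ⟨k, θ⟩ ⟨k', θ'⟩ h
    simp only at h
    have h1 := SatD0.fcode_fst θ
    have h2 := SatD0.fcode_fst θ'
    rw [h] at h1
    have hk : k = k' := by omega
    subst hk
    rw [SatD0.fcode_inj θ θ' h]
  · intro x y
    exact SatD0.chi_iff x y
end
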